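/- arXiv:1904.06571 — 5 statements merged into one kernel-verified Lean document; each statement's English description precedes it below -/
import Mathlib

section
/- If S is a subset of the free quandle FQ(X) which is independent in the free group F(X) (i.e., S freely generates a free subgroup), then the subquandle of FQ(X) generated by S is a free quandle on S. -/
open FreeGroup
open Quandles

/-- The free quandle on `X`, realized as the union of the conjugacy classes of the
generators inside the free group `F(X)`. -/
def FQ (X : Type*) : Set (FreeGroup X) :=
  {g | ∃ (x : X) (w : FreeGroup X), g = w⁻¹ * FreeGroup.of x * w}

/-- A subset of a group that is a subquandle of `Conj G`, i.e. closed under both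
conjugation operations `a ▷ b = b⁻¹ a b` and `a ◁ b = b a b⁻¹`. -/
def IsSubquandle {G : Type*} [Group G] (Q : Set G) : Prop :=
  ∀ a ∈ Q, ∀ b ∈ Q, b⁻¹ * a * b ∈ Q ∧ b * a * b⁻¹ ∈ Q

/-- Membership in the subquandle of `Conj G` generated by a set `S`. -/
inductive SubquandleClosure {G : Type*} [Group G] (S : Set G) : G → Prop
  | base {a : G} : a ∈ S → SubquandleClosure S a
  | conj {a b : G} : SubquandleClosure S a → SubquandleClosure S b →
      SubquandleClosure S (b⁻¹ * a * b)
  | conjInv {a b : G} : SubquandleClosure S a → SubquandleClosure S b →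
      SubquandleClosure S (b * a * b⁻¹)

/-- A subset of a group is independent if it freely generates a free subgroup,
i.e. the induced homomorphism from the free group on `S` is injective. -/
def Independent {G : Type*} [Group G] (S : Set G) : Prop :=
  Function.Injective (FreeGroup.lift (Subtype.val : S → G))

/-- A subset `Q` of a group, closed under conjugation, is a free quandle with basis
`S ⊆ Q` if it satisfies the universal property of free quandles: every map from `S`
to a quandle extends uniquely to a quandle morphism on `Q`. -/
def IsFreeQuandleOn {G : Type*} [Group G] (Q S : Set G) : Prop :=
  ∃ hSQ : S ⊆ Q,
    ∀ (Q' : Type) [Quandle Q'] (f : S → Q'),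
      ∃! h : Q → Q',
        (∀ s : S, h ⟨s.1, hSQ s.2⟩ = f s) ∧
        ∀ (a b : Q) (hm : (a : G) * (b : G) * (a : G)⁻¹ ∈ Q),
          h ⟨(a : G) * (b : G) * (a : G)⁻¹, hm⟩ = Shelf.act (h a) (h b)

/-- `w` has no first letter equal to `x` or `x⁻¹`. -/
def FirstLetterNe {X : Type*} [DecidableEq X] (w : FreeGroup X) (x : X) : Prop :=
  w.toWord.head?.map Prod.fst ≠ some x

/-- `P x`: reduced words `w` with `x^w ∈ Q` which are trivial or do not start
with `x^{±1}`. -/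
def Px {X : Type*} [DecidableEq X] (Q : Set (FreeGroup X)) (x : X) : Set (FreeGroup X) :=
  {w | w⁻¹ * FreeGroup.of x * w ∈ Q ∧ (w = 1 ∨ FirstLetterNe w x)}

/-- `T x`: the "non-shrinkable" elements of `P x`. -/
def Tx {X : Type*} [DecidableEq X] (Q : Set (FreeGroup X)) (x : X) : Set (FreeGroup X) :=
  {w ∈ Px Q x | ∀ q ∈ Q, ∀ ε ∈ ({1, -1} : Set ℤ), (w * q ^ ε).norm > w.norm}

/-- The candidate basis `S(Q) = ⋃ₓ x^{Tₓ}`. -/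
def SQbasis {X : Type*} [DecidableEq X] (Q : Set (FreeGroup X)) : Set (FreeGroup X) :=
  ⋃ x : X, {g | ∃ w ∈ Tx Q x, g = w⁻¹ * FreeGroup.of x * w}

/-- In the product of the reduced words `w` and `v`, exactly `k` letters cancel from
the end of `w` against `k` letters from the beginning of `v`. -/
def CancelBound {X : Type*} [DecidableEq X] (w v : FreeGroup X) (k : ℕ) : Prop :=
  (w * v).toWord = w.toWord.take (w.toWord.length - k) ++ v.toWord.drop k


section FGAux
variable {α : Type*} [DecidableEq α]

omit [DecidableEq α] in
theorem auxSQ_red_eq {L₁ L₂ : List (α × Bool)} (h : FreeGroup.Red L₁ L₂)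
    (hl : L₁.length = L₂.length) : L₁ = L₂ :=
  (h.sublist.eq_of_length hl.symm).symm

theorem auxSQ_reduce_tail {a : α × Bool} {L : List (α × Bool)}
    (h : FreeGroup.reduce (a :: L) = a :: L) : FreeGroup.reduce L = L := by
  have hlen : (FreeGroup.reduce L).length ≤ L.length :=
    FreeGroup.Red.length_le FreeGroup.reduce.red
  rw [FreeGroup.reduce.cons] at h
  rcases hr : FreeGroup.reduce L with _ | ⟨hd, tl⟩
  · rw [hr] at h
    simp only [List.casesOn] at h
    injection h
  · rw [hr] at h
    simp only [List.casesOn] at h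
    split_ifs at h with hc
    · exfalso
      have h1 := congrArg List.length h
      have h2 := congrArg List.length hr
      simp at h1 h2
      omega
    · injection h

theorem auxSQ_comm (x : α) :
    ∀ (c : FreeGroup α), c * FreeGroup.of x = FreeGroup.of x * c →
      ∃ n : ℤ, c = FreeGroup.of x ^ n := by
  suffices H : ∀ (n : ℕ) (c : FreeGroup α), c.toWord.length = n →
      c * FreeGroup.of x = FreeGroup.of x * c → ∃ m : ℤ, c = FreeGroup.of x ^ m by
    intro c hc; exact H _ c rfl hc
  intro n
  induction n using Nat.strong_induction_on with
  | _ n IH =>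
    intro c hlen hc
    rcases hL : c.toWord with _ | ⟨⟨y, b⟩, L⟩
    · exact ⟨0, by simpa using FreeGroup.toWord_eq_nil_iff.mp hL⟩
    have hred : FreeGroup.reduce ((y, b) :: L) = (y, b) :: L := by
      rw [← hL]; exact c.reduce_toWord
    have hLred : FreeGroup.reduce L = L := auxSQ_reduce_tail hred
    have hcmk : c = FreeGroup.mk ((y, b) :: L) := by rw [← hL, FreeGroup.mk_toWord]
    by_cases hyx : y = x
    · subst hyx
      have hc'w : (FreeGroup.mk L).toWord = L := by rw [FreeGroup.toWord_mk, hLred]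
      have hlenL : L.length < n := by rw [← hlen, hL]; simp
      cases b with
      | true =>
        have hsplit : c = FreeGroup.of y * FreeGroup.mk L := by
          rw [hcmk, FreeGroup.of, FreeGroup.mul_mk]
          rfl
        have hcomm' : FreeGroup.mk L * FreeGroup.of y = FreeGroup.of y * FreeGroup.mk L := by
          have h2 := hc
          rw [hsplit, mul_assoc] at h2
          exact mul_left_cancel h2
        obtain ⟨m, hm⟩ := IH L.length hlenL (FreeGroup.mk L) (by rw [hc'w]) hcomm'
        refine ⟨m + 1, ?_⟩
        rw [hsplit, hm]
        group
      | false =>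
        have hinv : FreeGroup.mk [(y, false)] = (FreeGroup.of y)⁻¹ := by
          rw [FreeGroup.of, FreeGroup.inv_mk]; rfl
        have hsplit : c = (FreeGroup.of y)⁻¹ * FreeGroup.mk L := by
          rw [hcmk, ← hinv, FreeGroup.mul_mk]; rfl
        have hcomm' : FreeGroup.mk L * FreeGroup.of y = FreeGroup.of y * FreeGroup.mk L := by
          have h2 := hc
          rw [hsplit] at h2
          have h3 := congrArg (fun z => FreeGroup.of y * z) h2
          simp only [← mul_assoc, mul_inv_cancel, one_mul] at h3
          exact h3
        obtain ⟨m, hm⟩ := IH L.length hlenL (FreeGroup.mk L) (by rw [hc'w]) hcomm'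
        refine ⟨m - 1, ?_⟩
        rw [hsplit, hm]
        group
    · exfalso
      have hredx : FreeGroup.reduce ((x, true) :: (y, b) :: L) = (x, true) :: (y, b) :: L := by
        rw [FreeGroup.reduce.cons, hred]
        simp [Ne.symm hyx]
      have hxc : (FreeGroup.of x * c).toWord = (x, true) :: (y, b) :: L := by
        rw [hcmk, FreeGroup.of, FreeGroup.mul_mk, FreeGroup.toWord_mk]
        exact hredx
      have h2 : c * FreeGroup.of x = FreeGroup.mk (c.toWord ++ [(x, true)]) := by
        conv_lhs => rw [← FreeGroup.mk_toWord (x := c)]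
        rw [FreeGroup.of, FreeGroup.mul_mk]
      have h3 : FreeGroup.reduce (c.toWord ++ [(x, true)]) = (x, true) :: (y, b) :: L := by
        rw [← FreeGroup.toWord_mk, ← h2, hc, hxc]
      have hr2 : FreeGroup.Red (c.toWord ++ [(x, true)]) ((x, true) :: (y, b) :: L) := by
        rw [← h3]; exact FreeGroup.reduce.red
      have h4 := auxSQ_red_eq hr2 (by rw [hL]; simp)
      rw [hL] at h4
      simp at h4
      exact hyx h4.1.1

theorem auxSQ_nonconj {x y : α} {w v : FreeGroup α}
    (h : w⁻¹ * FreeGroup.of x * w = v⁻¹ * FreeGroup.of y * v) : x = y := by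
  by_contra hxy
  set φ : FreeGroup α →* Multiplicative ℤ :=
    FreeGroup.lift (fun a => Multiplicative.ofAdd (if a = x then (1 : ℤ) else 0)) with hφ
  have key : ∀ (u : FreeGroup α) (a : α), φ (u⁻¹ * FreeGroup.of a * u) = φ (FreeGroup.of a) := by
    intro u a
    rw [MonoidHom.map_mul, MonoidHom.map_mul, MonoidHom.map_inv,
      mul_comm (φ u)⁻¹ (φ (FreeGroup.of a)), inv_mul_cancel_right]
  have h2 : φ (FreeGroup.of x) = φ (FreeGroup.of y) := by
    rw [← key w x, ← key v y, h]
  rw [hφ, FreeGroup.lift_apply_of, FreeGroup.lift_apply_of, if_pos rfl, if_neg (Ne.symm hxy)] at h2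
  exact one_ne_zero (Multiplicative.ofAdd.injective h2)

theorem auxSQ_conj_eq {x : α} {v w : FreeGroup α}
    (h : v⁻¹ * FreeGroup.of x * v = w⁻¹ * FreeGroup.of x * w) :
    ∃ n : ℤ, v = FreeGroup.of x ^ n * w := by
  have hc : (v * w⁻¹) * FreeGroup.of x = FreeGroup.of x * (v * w⁻¹) := by
    calc (v * w⁻¹) * FreeGroup.of x = v * (w⁻¹ * FreeGroup.of x * w) * w⁻¹ := by group
    _ = v * (v⁻¹ * FreeGroup.of x * v) * w⁻¹ := by rw [h]
    _ = FreeGroup.of x * (v * w⁻¹) := by group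
  obtain ⟨n, hn⟩ := auxSQ_comm x (v * w⁻¹) hc
  exact ⟨n, by rw [← hn]; group⟩

end FGAux

section QAux

theorem auxSQ_zpow_fix {Q' : Type*} (σ : Equiv.Perm Q') (q : Q') (h : σ q = q) :
    ∀ n : ℤ, (σ ^ n) q = q := by
  have hnat : ∀ m : ℕ, (σ ^ m) q = q := by
    intro m
    induction m with
    | zero => simp
    | succ k ih => rw [pow_succ, Equiv.Perm.mul_apply, h, ih]
  intro n
  cases n with
  | ofNat m => simpa using hnat m
  | negSucc m =>
    rw [zpow_negSucc]
    have h1 : (σ ^ (m + 1))⁻¹ q = (σ ^ (m + 1))⁻¹ ((σ ^ (m + 1)) q) := by rw [hnat (m + 1)]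
    rw [h1, show (σ ^ (m + 1))⁻¹ ((σ ^ (m + 1)) q) = q from (σ ^ (m + 1)).symm_apply_apply q]

variable {Y : Type*} {Q' : Type*} [Quandle Q'] (f : Y → Q')

/-- The permutation representation of the free group induced by `f`. -/
noncomputable def auxSQ_rho : FreeGroup Y →* Equiv.Perm Q' :=
  FreeGroup.lift (fun s => Rack.act' (f s))

theorem auxSQ_rho_of (s : Y) : auxSQ_rho f (FreeGroup.of s) = Rack.act' (f s) :=
  FreeGroup.lift_apply_of

theorem auxSQ_act_rho (u : FreeGroup Y) :
    ∀ q : Q', Rack.act' ((auxSQ_rho f u) q) =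
      auxSQ_rho f u * Rack.act' q * (auxSQ_rho f u)⁻¹ := by
  have genCase : ∀ s : Y, ∀ q : Q', Rack.act' ((auxSQ_rho f (FreeGroup.of s)) q) =
      auxSQ_rho f (FreeGroup.of s) * Rack.act' q * (auxSQ_rho f (FreeGroup.of s))⁻¹ := by
    intro s q
    rw [auxSQ_rho_of]
    have h1 : (Rack.act' (f s)) q = f s ◃ q := Rack.act'_apply _ _
    rw [h1]
    exact Rack.ad_conj (f s) q
  have invCase : ∀ u : FreeGroup Y,
      (∀ q : Q', Rack.act' ((auxSQ_rho f u) q) =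
        auxSQ_rho f u * Rack.act' q * (auxSQ_rho f u)⁻¹) →
      ∀ q : Q', Rack.act' ((auxSQ_rho f u⁻¹) q) =
        auxSQ_rho f u⁻¹ * Rack.act' q * (auxSQ_rho f u⁻¹)⁻¹ := by
    intro u ih q
    rw [_root_.map_inv]
    have h2 := ih ((auxSQ_rho f u)⁻¹ q)
    rw [show (auxSQ_rho f u) ((auxSQ_rho f u)⁻¹ q) = q from (auxSQ_rho f u).apply_symm_apply q] at h2
    rw [h2]
    group
  induction u using FreeGroup.induction_on with
  | C1 => intro q; simp
  | of s => exact genCase s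
  | inv_of s _ => exact invCase _ (genCase s)
  | mul u v ihu ihv =>
    intro q
    rw [_root_.map_mul, Equiv.Perm.mul_apply, ihu, ihv]
    group

theorem auxSQ_rho_zpow_fix (s : Y) (n : ℤ) :
    (auxSQ_rho f (FreeGroup.of s ^ n)) (f s) = f s := by
  rw [_root_.map_zpow, auxSQ_rho_of]
  exact auxSQ_zpow_fix _ _ (by rw [Rack.act'_apply]; exact Quandle.fix) n

end QAux


section Closure
variable {X : Type*} (S : Set (FreeGroup X))

local notation "ι" => FreeGroup.lift (Subtype.val : S → FreeGroup X)

theorem auxSQ_closure_conj :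
    ∀ u : FreeGroup S, ∀ g : FreeGroup X, SubquandleClosure S g →
      SubquandleClosure S ((ι u)⁻¹ * g * ι u) ∧
      SubquandleClosure S (ι u * g * (ι u)⁻¹) := by
  intro u
  induction u using FreeGroup.induction_on with
  | C1 =>
    intro g hg
    refine ⟨?_, ?_⟩ <;> simpa using hg
  | of s =>
    intro g hg
    have hof : ι (FreeGroup.of s : FreeGroup S) = (s : FreeGroup X) := FreeGroup.lift_apply_of
    rw [hof]
    exact ⟨.conj hg (.base s.2), .conjInv hg (.base s.2)⟩
  | inv_of s ih =>
    intro g hg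
    obtain ⟨h1, h2⟩ := ih g hg
    constructor
    · have e : (ι ((FreeGroup.of s : FreeGroup S)⁻¹))⁻¹ * g * ι ((FreeGroup.of s : FreeGroup S)⁻¹)
          = ι (FreeGroup.of s : FreeGroup S) * g * (ι (FreeGroup.of s : FreeGroup S))⁻¹ := by
        rw [_root_.map_inv]; group
      rw [e]; exact h2
    · have e : ι ((FreeGroup.of s : FreeGroup S)⁻¹) * g * (ι ((FreeGroup.of s : FreeGroup S)⁻¹))⁻¹
          = (ι (FreeGroup.of s : FreeGroup S))⁻¹ * g * ι (FreeGroup.of s : FreeGroup S) := by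
        rw [_root_.map_inv]; group
      rw [e]; exact h1
  | mul u v ihu ihv =>
    intro g hg
    constructor
    · have e : (ι (u * v))⁻¹ * g * ι (u * v)
          = (ι v)⁻¹ * ((ι u)⁻¹ * g * ι u) * ι v := by
        rw [_root_.map_mul]; group
      rw [e]
      exact (ihv _ (ihu g hg).1).1
    · have e : ι (u * v) * g * (ι (u * v))⁻¹
          = ι u * (ι v * g * (ι v)⁻¹) * (ι u)⁻¹ := by
        rw [_root_.map_mul]; group
      rw [e]
      exact (ihu _ (ihv g hg).2).2

theorem auxSQ_mem_iff (g : FreeGroup X) :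
    SubquandleClosure S g ↔ ∃ (s : S) (w : FreeGroup S),
      g = ι (w⁻¹ * FreeGroup.of s * w) := by
  constructor
  · intro hg
    induction hg with
    | base ha => exact ⟨⟨_, ha⟩, 1, by simp [FreeGroup.lift_apply_of]⟩
    | conj ha hb iha ihb =>
      obtain ⟨s, u, hu⟩ := iha
      obtain ⟨t, v, hv⟩ := ihb
      refine ⟨s, u * (v⁻¹ * FreeGroup.of t * v), ?_⟩
      rw [hu, hv]
      simp only [_root_.map_mul, _root_.map_inv]
      group
    | conjInv ha hb iha ihb =>
      obtain ⟨s, u, hu⟩ := iha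
      obtain ⟨t, v, hv⟩ := ihb
      refine ⟨s, u * (v⁻¹ * FreeGroup.of t * v)⁻¹, ?_⟩
      rw [hu, hv]
      simp only [_root_.map_mul, _root_.map_inv]
      group
  · rintro ⟨s, w, rfl⟩
    have h1 : ι (w⁻¹ * FreeGroup.of s * w) = (ι w)⁻¹ * (s : FreeGroup X) * ι w := by
      simp only [_root_.map_mul, _root_.map_inv, FreeGroup.lift_apply_of]
    rw [h1]
    exact (auxSQ_closure_conj S w (s : FreeGroup X) (.base s.2)).1

end Closure


/-- If `S ⊆ FQ X` is independent in `F(X)`, then the subquandle of `FQ X`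
generated by `S` is a free quandle on `S`. -/
theorem stmt_2 {X : Type*} (S : Set (FreeGroup X)) (hS : S ⊆ FQ X)
    (hind : Independent S) :
    IsFreeQuandleOn {g : FreeGroup X | SubquandleClosure S g} S := by
  classical
  refine ⟨fun s hs => SubquandleClosure.base hs, ?_⟩
  intro Q' _ f
  have hrep : ∀ g : {g : FreeGroup X | SubquandleClosure S g}, ∃ p : S × FreeGroup S,
      (g : FreeGroup X) = FreeGroup.lift (Subtype.val : S → FreeGroup X)
        (p.2⁻¹ * FreeGroup.of p.1 * p.2) := by
    intro g
    obtain ⟨s, w, hw⟩ := (auxSQ_mem_iff S g.1).mp g.2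
    exact ⟨(s, w), hw⟩
  set h : {g : FreeGroup X | SubquandleClosure S g} → Q' := fun g =>
    (auxSQ_rho f (Classical.choose (hrep g)).2⁻¹) (f (Classical.choose (hrep g)).1) with hh
  have hval : ∀ (g : {g : FreeGroup X | SubquandleClosure S g}) (s : S) (w : FreeGroup S),
      (g : FreeGroup X) = FreeGroup.lift (Subtype.val : S → FreeGroup X)
        (w⁻¹ * FreeGroup.of s * w) → h g = (auxSQ_rho f w⁻¹) (f s) := by
    intro g s w hw
    simp only [hh]
    have hv := Classical.choose_spec (hrep g)
    set p := Classical.choose (hrep g) with hp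
    have heq : p.2⁻¹ * FreeGroup.of p.1 * p.2 = w⁻¹ * FreeGroup.of s * w :=
      hind (hv.symm.trans hw)
    have hts : p.1 = s := auxSQ_nonconj heq
    rw [hts] at heq ⊢
    obtain ⟨n, hn⟩ := auxSQ_conj_eq heq
    rw [hn]
    have e : (FreeGroup.of s ^ n * w)⁻¹ = w⁻¹ * FreeGroup.of s ^ (-n) := by group
    rw [e, _root_.map_mul, Equiv.Perm.mul_apply, auxSQ_rho_zpow_fix]
  have hbase : ∀ s : S,
      h ⟨s.1, SubquandleClosure.base s.2⟩ = f s := by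
    intro s
    have e : (s : FreeGroup X) = FreeGroup.lift (Subtype.val : S → FreeGroup X)
        ((1 : FreeGroup S)⁻¹ * FreeGroup.of s * 1) := by
      simp [FreeGroup.lift_apply_of]
    rw [hval _ s 1 e]
    simp
  have hconj : ∀ (a b : {g : FreeGroup X | SubquandleClosure S g})
      (hm : (a : FreeGroup X) * (b : FreeGroup X) * (a : FreeGroup X)⁻¹ ∈
        {g : FreeGroup X | SubquandleClosure S g}),
      h ⟨(a : FreeGroup X) * (b : FreeGroup X) * (a : FreeGroup X)⁻¹, hm⟩
        = Shelf.act (h a) (h b) := by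
    intro a b hm
    obtain ⟨s, u, hu⟩ := (auxSQ_mem_iff S a.1).mp a.2
    obtain ⟨t, v, hv⟩ := (auxSQ_mem_iff S b.1).mp b.2
    have ha' : h a = (auxSQ_rho f u⁻¹) (f s) := hval a s u hu
    have hb' : h b = (auxSQ_rho f v⁻¹) (f t) := hval b t v hv
    have hw : (a : FreeGroup X) * (b : FreeGroup X) * (a : FreeGroup X)⁻¹
        = FreeGroup.lift (Subtype.val : S → FreeGroup X)
          ((v * (u⁻¹ * FreeGroup.of s * u)⁻¹)⁻¹ * FreeGroup.of t
            * (v * (u⁻¹ * FreeGroup.of s * u)⁻¹)) := by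
      rw [hu, hv]
      simp only [_root_.map_mul, _root_.map_inv]
      group
    have key := hval ⟨_, hm⟩ t (v * (u⁻¹ * FreeGroup.of s * u)⁻¹) hw
    rw [key]
    have e1 : (v * (u⁻¹ * FreeGroup.of s * u)⁻¹)⁻¹
        = (u⁻¹ * FreeGroup.of s * u) * v⁻¹ := by group
    rw [e1, _root_.map_mul, Equiv.Perm.mul_apply, ← hb']
    have e2 : auxSQ_rho f (u⁻¹ * FreeGroup.of s * u) = Rack.act' (h a) := by
      rw [ha', auxSQ_act_rho f u⁻¹ (f s)]
      simp only [_root_.map_mul, _root_.map_inv, auxSQ_rho_of]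
      group
    rw [e2]
    exact Rack.act'_apply (h a) (h b)
  refine ⟨h, ⟨hbase, hconj⟩, ?_⟩
  rintro h' ⟨h'base, h'conj⟩
  funext g
  obtain ⟨g, hg⟩ := g
  induction hg with
  | @base a ha =>
    exact (h'base ⟨a, ha⟩).trans (hbase ⟨a, ha⟩).symm
  | @conj a b ha hb iha ihb =>
    have hm' : b * (b⁻¹ * a * b) * b⁻¹ ∈ {g : FreeGroup X | SubquandleClosure S g} := by
      have e : b * (b⁻¹ * a * b) * b⁻¹ = a := by group
      show SubquandleClosure S _
      rw [e]
      exact ha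
    have e1 := h'conj ⟨b, hb⟩ ⟨_, SubquandleClosure.conj ha hb⟩ hm'
    have e2 := hconj ⟨b, hb⟩ ⟨_, SubquandleClosure.conj ha hb⟩ hm'
    have eq1 : (⟨b * (b⁻¹ * a * b) * b⁻¹, hm'⟩ :
        {g : FreeGroup X | SubquandleClosure S g}) = ⟨a, ha⟩ := Subtype.ext (by group)
    rw [eq1] at e1 e2
    rw [iha, ihb] at e1
    have e3 := e1.symm.trans e2
    exact (Rack.left_cancel _).mp e3
  | @conjInv a b ha hb iha ihb =>
    have e1 := h'conj ⟨b, hb⟩ ⟨a, ha⟩ (SubquandleClosure.conjInv ha hb)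
    have e2 := hconj ⟨b, hb⟩ ⟨a, ha⟩ (SubquandleClosure.conjInv ha hb)
    rw [iha, ihb] at e1
    exact e1.trans e2.symm
end

section
/- Let Q be a subquandle of FQ(X). For each x ∈ X let P_x = {w ∈ F(X) : x^w ∈ Q and (w = 1 or the first letter of the reduced word w is not x^{±1})}, and T_x = {w ∈ P_x : for all q ∈ Q and ε ∈ {1,−1}, |w q^ε| > |w|}. Then the set S(Q) = ⋃_{x∈X} {x^w : w ∈ T_x} is contained in Q and generates Q as a quandle. -/
open FreeGroup

section Helpers

open List

variable {X : Type*} [DecidableEq X]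

def Nred (a b : X × Bool) : Prop := ¬(a.1 = b.1 ∧ a.2 = !b.2)

lemma reduce_eq_self_of_chain' : ∀ {L : List (X × Bool)}, L.Chain' Nred → reduce L = L
  | [], _ => rfl
  | [_], _ => rfl
  | a :: b :: L, h => by
      have h1 : Nred a b := (List.isChain_cons_cons.mp h).1
      have h2 := reduce_eq_self_of_chain' (List.isChain_cons_cons.mp h).2
      rw [reduce.cons, h2]
      simp only [if_neg h1]

lemma not_chain'_decomp : ∀ {L : List (X × Bool)}, ¬ L.Chain' Nred →
    ∃ L₁ a b L₂, L = L₁ ++ a :: b :: L₂ ∧ ¬ Nred a b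
  | [], h => absurd List.isChain_nil h
  | [_], h => absurd (List.isChain_singleton _) h
  | a :: b :: L, h => by
      change ¬ List.IsChain _ _ at h
      rw [List.isChain_cons_cons] at h
      by_cases hab : Nred a b
      · have h' : ¬ (b :: L).Chain' Nred := fun hc => h ⟨hab, hc⟩
        obtain ⟨L₁, c, d, L₂, hE, hcd⟩ := not_chain'_decomp h'
        exact ⟨a :: L₁, c, d, L₂, by rw [hE, List.cons_append], hcd⟩
      · exact ⟨[], a, b, L, rfl, hab⟩

lemma chain'_of_reduce_eq {L : List (X × Bool)} (h : reduce L = L) : L.Chain' Nred := by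
  by_contra hc
  obtain ⟨L₁, a, b, L₂, hE, hab⟩ := not_chain'_decomp hc
  simp only [Nred, not_not] at hab
  obtain ⟨xa, ba⟩ := a
  obtain ⟨xb, bb⟩ := b
  simp only at hab
  obtain ⟨h1, h2⟩ := hab
  subst h1; subst h2
  have : reduce L = L₁ ++ (xa, !bb) :: (xa, !(!bb)) :: L₂ := by rw [h, hE, Bool.not_not]
  exact reduce.not this

lemma chain'_toWord (w : FreeGroup X) : w.toWord.Chain' Nred :=
  chain'_of_reduce_eq (reduce_toWord w)

lemma chain'_invRev {L : List (X × Bool)} (h : L.Chain' Nred) : (invRev L).Chain' Nred := by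
  rw [invRev]
  change List.IsChain _ _
  rw [List.isChain_reverse, List.isChain_map]
  refine h.imp ?_
  rintro ⟨xa, ba⟩ ⟨xb, bb⟩ hab
  simp only [Nred, flip, not_and] at hab ⊢
  rintro h1 h2
  exact hab h1.symm (by simpa using h2.symm)

lemma firstLetterNe_iff {w : FreeGroup X} {x : X} (h : FirstLetterNe w x) :
    ∀ y ∈ w.toWord.head?, y.1 ≠ x := by
  intro y hy hyx
  rw [Option.mem_def] at hy
  exact h (by rw [hy]; simp [hyx])

lemma conj_toWord {w : FreeGroup X} {x : X} (h : FirstLetterNe w x) :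
    (w⁻¹ * of x * w).toWord = invRev w.toWord ++ (x, true) :: w.toWord := by
  have hof : of x = mk [(x, true)] := rfl
  have hmk : w⁻¹ * of x * w = mk (invRev w.toWord ++ (x, true) :: w.toWord) := by
    conv_lhs => rw [← mk_toWord (x := w)]
    rw [inv_mk, hof, mul_mk, mul_mk]
    simp
  rw [hmk, toWord_mk]
  apply reduce_eq_self_of_chain'
  have hL := chain'_toWord w
  change List.IsChain _ _
  rw [List.isChain_append]
  refine ⟨chain'_invRev hL, ?_, ?_⟩
  · rw [List.isChain_cons]
    refine ⟨?_, hL⟩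
    intro y hy
    simp only [Nred, not_and]
    intro h1 _
    exact firstLetterNe_iff h y hy h1.symm
  · intro a ha b hb
    simp only [List.head?_cons, Option.mem_def, Option.some.injEq] at hb
    subst hb
    simp only [invRev, List.getLast?_reverse, List.head?_map, Option.mem_def,
      Option.map_eq_some_iff] at ha
    obtain ⟨y, hy, rfl⟩ := ha
    simp only [Nred, not_and]
    intro h1
    exact absurd h1 (firstLetterNe_iff h y hy)

lemma norm_conj (w : FreeGroup X) (x : X) (h : FirstLetterNe w x) :
    (w⁻¹ * of x * w).norm = 2 * w.norm + 1 := by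
  have := conj_toWord h
  simp only [FreeGroup.norm, this, List.length_append, List.length_cons, invRev_length]
  ring

lemma strip_letter {w : FreeGroup X} {x : X} {b : Bool} {L : List (X × Bool)}
    (h : w.toWord = (x, b) :: L) :
    ∃ w' : FreeGroup X, w'⁻¹ * of x * w' = w⁻¹ * of x * w ∧ w'.norm + 1 = w.norm := by
  refine ⟨mk [(x, !b)] * w, ?_, ?_⟩
  · have hc : mk [(x, !b)] * of x = of x * mk [(x, !b)] := by
      have hof : of x = mk [(x, true)] := rfl
      cases b <;> · rw [hof, mul_mk, mul_mk]; apply reduce.exact; simp [reduce]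
    rw [mul_inv_rev, mul_assoc, mul_assoc, ← mul_assoc (of x), ← hc]
    group
  · have htw : (mk [(x, !b)] * w).toWord = L := by
      conv_lhs => rw [← mk_toWord (x := w)]
      rw [mul_mk, List.singleton_append, h, toWord_mk, reduce.cons]
      have : reduce ((x, b) :: L) = (x, b) :: L := by rw [← h]; exact reduce_toWord w
      rw [this]
      simp
    simp only [FreeGroup.norm, htw, h, List.length_cons]

lemma norm_mul_sub (a b : FreeGroup X) : ∃ n, a.norm + b.norm = (a * b).norm + 2 * n := by
  have hred : Red (a.toWord ++ b.toWord) ((a * b).toWord) := by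
    have : a * b = mk (a.toWord ++ b.toWord) := by rw [← mul_mk, mk_toWord, mk_toWord]
    rw [this, toWord_mk]
    exact reduce.red
  obtain ⟨n, hn⟩ := Red.length hred
  exact ⟨n, by simpa [FreeGroup.norm, List.length_append] using hn⟩

lemma norm_odd_of_mem_FQ {q : FreeGroup X} (h : q ∈ FQ X) : q.norm % 2 = 1 := by
  obtain ⟨x, w, rfl⟩ := h
  obtain ⟨n, hn⟩ := norm_mul_sub w⁻¹ (of x * w)
  obtain ⟨m, hm⟩ := norm_mul_sub (of x) w
  rw [← mul_assoc] at hn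
  have h1 : (w⁻¹).norm = w.norm := norm_inv_eq
  have h2 : (of x).norm = 1 := norm_of x
  omega

lemma exists_short_rep : ∀ (n : ℕ) (x : X) (w : FreeGroup X), w.norm ≤ n →
    ∃ (y : X) (v : FreeGroup X), w⁻¹ * of x * w = v⁻¹ * of y * v ∧
      2 * v.norm + 1 ≤ (w⁻¹ * of x * w).norm := by
  intro n
  induction n using Nat.strong_induction_on with
  | _ n ih =>
    intro x w hw
    by_cases hfl : FirstLetterNe w x
    · exact ⟨x, w, rfl, by rw [norm_conj w x hfl]⟩
    · simp only [FirstLetterNe, ne_eq, not_not, Option.map_eq_some_iff] at hfl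
      obtain ⟨p, hp, hpx⟩ := hfl
      obtain ⟨L, hL⟩ : ∃ L, w.toWord = p :: L := by
        cases hw' : w.toWord with
        | nil => rw [hw'] at hp; simp at hp
        | cons q M => rw [hw'] at hp; simp at hp; exact ⟨M, by rw [hp]⟩
      obtain ⟨w', hw'conj, hw'n⟩ := strip_letter (x := x) (b := p.2)
        (by rw [hL, ← hpx])
      have hlt : w'.norm < n := by
        have : 1 ≤ w.norm := by simp [FreeGroup.norm, hL]
        omega
      obtain ⟨y, v, hv, hvn⟩ := ih w'.norm hlt x w' le_rfl
      exact ⟨y, v, by rw [← hw'conj, hv], by rwa [← hw'conj]⟩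

lemma gen_aux (Q : Set (FreeGroup X)) (hQ : Q ⊆ FQ X) (hsub : IsSubquandle Q) :
    ∀ (n : ℕ) (x : X) (w : FreeGroup X), w.norm ≤ n → ∀ q ∈ Q, q = w⁻¹ * of x * w →
      SubquandleClosure (SQbasis Q) q := by
  intro n
  induction n using Nat.strong_induction_on with
  | _ n ih =>
    intro x w hwn q hqQ hq
    by_cases hfl : w = 1 ∨ FirstLetterNe w x
    · -- w ∈ Px Q x
      have hwPx : w ∈ Px Q x := ⟨hq ▸ hqQ, hfl⟩
      by_cases hT : w ∈ Tx Q x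
      · exact SubquandleClosure.base (Set.mem_iUnion.mpr ⟨x, w, hT, hq⟩)
      · -- exists shrinking q'
        simp only [Tx, Set.mem_setOf_eq, not_and, not_forall] at hT
        obtain ⟨q', hq'Q, ε, hε, hle⟩ := hT hwPx
        rw [gt_iff_lt, not_lt] at hle
        -- ε = 1 or -1
        have hε' : ε = 1 ∨ ε = -1 := hε
        set u := w * q' ^ ε with hu
        have hFLN1 : FirstLetterNe w x := by
          rcases hfl with rfl | h
          · simp [FirstLetterNe, toWord_one]
          · exact h
        -- norms
        have hq'odd : q'.norm % 2 = 1 := norm_odd_of_mem_FQ (hQ hq'Q)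
        have hq'e : (q' ^ ε).norm = q'.norm := by
          rcases hε' with rfl | rfl
          · rw [zpow_one]
          · rw [zpow_neg, zpow_one, norm_inv_eq]
        obtain ⟨m, hm⟩ := norm_mul_sub w (q' ^ ε)
        rw [← hu] at hm
        have hult : u.norm < w.norm := by omega
        -- q₁
        set q₁ := u⁻¹ * of x * u with hq₁def
        have hq₁eq : q₁ = (q' ^ ε)⁻¹ * q * q' ^ ε := by
          rw [hq₁def, hu, hq]; group
        have hq₁Q : q₁ ∈ Q := by
          rcases hε' with rfl | rfl
          · rw [hq₁eq]; simpa using (hsub q hqQ q' hq'Q).1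
          · rw [hq₁eq]; simpa using (hsub q hqQ q' hq'Q).2
        have hc₁ : SubquandleClosure (SQbasis Q) q₁ :=
          ih u.norm (by omega) x u le_rfl q₁ hq₁Q rfl
        -- closure of q'
        have hq'norm : q'.norm ≤ w.norm + u.norm := by
          have : q' ^ ε = w⁻¹ * u := by rw [hu]; group
          calc q'.norm = (q' ^ ε).norm := hq'e.symm
            _ = (w⁻¹ * u).norm := by rw [this]
            _ ≤ (w⁻¹).norm + u.norm := norm_mul_le _ _
            _ = w.norm + u.norm := by rw [norm_inv_eq]
        obtain ⟨y₀, w₀, hq'rep⟩ := hQ hq'Q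
        obtain ⟨y, v, hvrep, hvn⟩ := exists_short_rep w₀.norm y₀ w₀ le_rfl
        rw [← hq'rep] at hvrep hvn
        have hvlt : v.norm < n := by
          have h2 : 2 * v.norm + 1 ≤ q'.norm := hvn
          have h3 : q'.norm ≤ w.norm + u.norm := hq'norm
          have h4 : u.norm < w.norm := hult
          have h5 : w.norm ≤ n := hwn
          omega
        have hc' : SubquandleClosure (SQbasis Q) q' :=
          ih v.norm hvlt y v le_rfl q' hq'Q hvrep
        -- combine
        rcases hε' with rfl | rfl
        · have : q = q' * q₁ * q'⁻¹ := by rw [hq₁eq, zpow_one]; group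
          rw [this]
          exact SubquandleClosure.conjInv hc₁ hc'
        · have : q = q'⁻¹ * q₁ * q' := by rw [hq₁eq, zpow_neg, zpow_one]; group
          rw [this]
          exact SubquandleClosure.conj hc₁ hc'
    · -- strip a leading letter
      push_neg at hfl
      obtain ⟨hw1, hfl2⟩ := hfl
      simp only [FirstLetterNe, ne_eq, not_not, Option.map_eq_some_iff] at hfl2
      obtain ⟨p, hp, hpx⟩ := hfl2
      obtain ⟨L, hL⟩ : ∃ L, w.toWord = p :: L := by
        cases hw' : w.toWord with
        | nil => rw [hw'] at hp; simp at hp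
        | cons r M => rw [hw'] at hp; simp at hp; exact ⟨M, by rw [hp]⟩
      obtain ⟨w', hw'conj, hw'n⟩ := strip_letter (x := x) (b := p.2) (by rw [hL, ← hpx])
      have h1 : 1 ≤ w.norm := by simp [FreeGroup.norm, hL]
      exact ih w'.norm (by omega) x w' le_rfl q hqQ (by rw [hq, ← hw'conj])

end Helpers

/-- For a subquandle `Q` of `FQ X`, the set `S(Q) = ⋃ₓ x^{Tₓ}` is contained in `Q`
and generates `Q` as a quandle. -/
theorem stmt_4 {X : Type*} [DecidableEq X] (Q : Set (FreeGroup X))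
    (hQ : Q ⊆ FQ X) (hsub : IsSubquandle Q) :
    SQbasis Q ⊆ Q ∧ ∀ q ∈ Q, SubquandleClosure (SQbasis Q) q := by
  constructor
  · intro g hg
    simp only [SQbasis, Set.mem_iUnion, Set.mem_setOf_eq] at hg
    obtain ⟨x, w, hwT, rfl⟩ := hg
    exact hwT.1.1
  · intro q hqQ
    obtain ⟨x, w, hq⟩ := hQ hqQ
    exact gen_aux Q hQ hsub w.norm x w le_rfl q hqQ hq
end

section
/- Every subquandle of a free quandle is a free quandle. -/
open FreeGroup

set_option linter.unusedSectionVars false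
set_option maxHeartbeats 1000000

open FreeGroup List

namespace SQF

/-- Adjacent letters that do not cancel. -/
def NC {X : Type*} : X × Bool → X × Bool → Prop := fun a b => ¬(a.1 = b.1 ∧ a.2 = !b.2)

/-- The suffix of length `n`. -/
def sfx {X : Type*} (n : ℕ) (L : List (X × Bool)) : List (X × Bool) := L.drop (L.length - n)

variable {X : Type*} [DecidableEq X]

/-- A chain-reduced word reduces to itself. -/
theorem reduce_eq_self_of_chain : ∀ {L : List (X × Bool)}, List.Chain' NC L → reduce L = L
  | [], _ => rfl
  | [a], _ => rfl
  | a :: b :: L, h => by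
    have hbl : List.Chain' NC (b :: L) := h.tail
    have hab : NC a b := List.isChain_cons_cons.1 h |>.1
    rw [reduce.cons, reduce_eq_self_of_chain hbl]
    simp only [NC] at hab
    simp [if_neg hab]

theorem chain'_reduce : ∀ (L : List (X × Bool)), List.Chain' NC (reduce L)
  | [] => List.isChain_nil
  | a :: L => by
    have ih := chain'_reduce L
    rw [reduce.cons]
    rcases h : reduce L with _ | ⟨b, tl⟩
    · exact List.isChain_singleton _
    · rw [h] at ih
      by_cases hc : a.1 = b.1 ∧ a.2 = !b.2
      · simp only [if_pos hc]
        exact ih.tail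
      · simp only [if_neg hc]
        exact List.isChain_cons_cons.2 ⟨hc, ih⟩

theorem chain'_toWord (g : FreeGroup X) : List.Chain' NC g.toWord := by
  have := chain'_reduce (X := X) g.toWord
  rwa [reduce_toWord] at this

theorem toWord_mk_of_chain {L : List (X × Bool)} (h : List.Chain' NC L) :
    (mk L).toWord = L := by rw [toWord_mk, reduce_eq_self_of_chain h]

theorem norm_toWord (g : FreeGroup X) : g.norm = g.toWord.length := rfl

theorem norm_mk_of_chain {L : List (X × Bool)} (h : List.Chain' NC L) :
    (mk L).norm = L.length := by rw [norm_toWord, toWord_mk_of_chain h]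

theorem invRev_append (L M : List (X × Bool)) :
    invRev (L ++ M) = invRev M ++ invRev L := by simp [invRev]

theorem invRev_cons (a : X × Bool) (L : List (X × Bool)) :
    invRev (a :: L) = invRev L ++ [(a.1, !a.2)] := by simp [invRev]

theorem invRev_singleton (a : X × Bool) : invRev [a] = [(a.1, !a.2)] := by simp [invRev]

theorem chain'_invRev {L : List (X × Bool)} (h : List.Chain' NC L) :
    List.Chain' NC (invRev L) := by
  unfold invRev
  show List.IsChain NC _
  rw [List.isChain_reverse]
  refine (List.isChain_map _).2 ?_
  refine h.imp ?_
  rintro ⟨x, b⟩ ⟨y, c⟩ hnc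
  simp only [NC, flip] at hnc ⊢
  rintro ⟨h1, h2⟩
  exact hnc ⟨h1.symm, by simpa using congrArg Bool.not h2.symm⟩

theorem cancel_core_aux : ∀ (n : ℕ) (L M : List (X × Bool)), L.length ≤ n →
    List.Chain' NC L → List.Chain' NC M →
    ∃ k, k ≤ L.length ∧ k ≤ M.length ∧
      reduce (L ++ M) = L.take (L.length - k) ++ M.drop k ∧
      L.drop (L.length - k) = invRev (M.take k) := by
  intro n
  induction n with
  | zero =>
    intro L M hn hL hM
    have : L = [] := List.eq_nil_of_length_eq_zero (by omega)
    subst this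
    exact ⟨0, by simp, by simp, by simp [reduce_eq_self_of_chain hM], by simp [invRev]⟩
  | succ n ih =>
    intro L M hn hL hM
    rcases L.eq_nil_or_concat' with rfl | ⟨L₀, a, rfl⟩
    · exact ⟨0, by simp, by simp, by simp [reduce_eq_self_of_chain hM], by simp [invRev]⟩
    rcases M with _ | ⟨b, M₀⟩
    · exact ⟨0, by simp, by simp, by simp [reduce_eq_self_of_chain hL], by simp [invRev]⟩
    by_cases hc : a.1 = b.1 ∧ a.2 = !b.2
    · -- cancellation step
      have hab : a = (b.1, !b.2) := by
        obtain ⟨x, bb⟩ := a; obtain ⟨y, cc⟩ := b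
        simp only [Prod.mk.injEq] at hc
        simp [hc.1, hc.2]
      have hred : reduce ((L₀ ++ [a]) ++ b :: M₀) = reduce (L₀ ++ M₀) := by
        have h2 : (L₀ ++ [a]) ++ b :: M₀ = L₀ ++ (b.1, !b.2) :: (b.1, b.2) :: M₀ := by
          rw [hab]; simp
        rw [h2]
        exact reduce.Step.eq Red.Step.not_rev
      have hlen : L₀.length ≤ n := by simp at hn; omega
      obtain ⟨k₀, hk₀L, hk₀M, hre, hdr⟩ := ih L₀ M₀ hlen
        (hL.prefix ⟨[a], rfl⟩) (hM.tail)
      have h1 : (L₀ ++ [a]).length - (k₀ + 1) = L₀.length - k₀ := by simp only [List.length_append, List.length_cons, List.length_nil]; omega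
      refine ⟨k₀ + 1, by simp only [List.length_append, List.length_cons, List.length_nil]; omega,
        by simp only [List.length_cons]; omega, ?_, ?_⟩
      · rw [hred, hre, h1, List.take_append_of_le_length (by omega)]
        simp
      · rw [h1, List.drop_append_of_le_length (by omega), hdr]
        have h3 : (b :: M₀).take (k₀ + 1) = b :: M₀.take k₀ := rfl
        rw [h3, invRev_cons, ← hab]
    · -- no cancellation: already reduced
      refine ⟨0, by simp, by simp, ?_, by simp [invRev]⟩
      have : List.Chain' NC ((L₀ ++ [a]) ++ b :: M₀) := by
        show List.IsChain NC _
        rw [List.isChain_append]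
        refine ⟨hL, hM, ?_⟩
        intro p hp q hq
        simp at hp hq
        subst hp; subst hq
        exact hc
      rw [reduce_eq_self_of_chain this, List.take_of_length_le (by simp)]; simp

/-- Element-level cancellation lemma. -/
theorem cancel (g h : FreeGroup X) :
    ∃ k, k ≤ g.norm ∧ k ≤ h.norm ∧
      (g * h).toWord = g.toWord.take (g.norm - k) ++ h.toWord.drop k ∧
      g.toWord.drop (g.norm - k) = invRev (h.toWord.take k) := by
  obtain ⟨k, h1, h2, h3, h4⟩ := cancel_core_aux g.toWord.length g.toWord h.toWord le_rfl
    (chain'_toWord g) (chain'_toWord h)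
  rw [← norm_toWord] at h1 h3 h4
  refine ⟨k, h1, h2, ?_, h4⟩
  have hgh : g * h = mk (g.toWord ++ h.toWord) := by rw [← mul_mk, mk_toWord, mk_toWord]
  rw [hgh, toWord_mk, h3]

theorem norm_mul_cancel {g h : FreeGroup X} {k : ℕ} (h1 : k ≤ g.norm) (h2 : k ≤ h.norm)
    (h3 : (g * h).toWord = g.toWord.take (g.norm - k) ++ h.toWord.drop k) :
    (g * h).norm = g.norm + h.norm - 2 * k := by
  have hl := congrArg List.length h3
  rw [List.length_append, List.length_take, List.length_drop] at hl
  rw [norm_toWord (g*h), hl, ← norm_toWord, ← norm_toWord]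
  omega

theorem length_sfx {n : ℕ} {L : List (X × Bool)} (h : n ≤ L.length) :
    (sfx n L).length = n := by simp [sfx]; omega

theorem sfx_sfx {m k : ℕ} {L : List (X × Bool)} (hmk : m ≤ k) (hk : k ≤ L.length) :
    sfx m (sfx k L) = sfx m L := by
  unfold sfx
  rw [List.drop_drop, List.length_drop]
  congr 1
  omega

theorem sfx_invRev (n : ℕ) (M : List (X × Bool)) :
    sfx n (invRev M) = invRev (M.take n) := by
  unfold sfx invRev
  rw [List.map_take, List.reverse_take]
  simp

theorem take_invRev (n : ℕ) (M : List (X × Bool)) :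
    (invRev M).take n = invRev (sfx n M) := by
  have := sfx_invRev n (invRev M)
  rw [invRev_invRev] at this
  rw [this, invRev_invRev]

theorem sfx_append {n : ℕ} {A B : List (X × Bool)} (h : n ≤ B.length) :
    sfx n (A ++ B) = sfx n B := by
  unfold sfx
  rw [List.length_append]
  have : A.length + B.length - n = A.length + (B.length - n) := by omega
  rw [this, ← List.drop_drop, List.drop_left]

theorem sfx_all {L : List (X × Bool)} : sfx L.length L = L := by simp [sfx]

/-- From the cancellation data, read off a common short suffix relation. -/
theorem sfx_of_cancel {g h : FreeGroup X} {k m : ℕ}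
    (hk : k ≤ g.norm) (hkh : k ≤ h.norm)
    (h4 : g.toWord.drop (g.norm - k) = invRev (h.toWord.take k))
    (hm : m ≤ k) :
    sfx m g.toWord = invRev (h.toWord.take m) := by
  have hs : sfx k g.toWord = invRev (h.toWord.take k) := by
    rw [sfx, ← norm_toWord]; exact h4
  have : sfx m g.toWord = sfx m (sfx k g.toWord) := by
    rw [sfx_sfx hm (by rw [← norm_toWord]; exact hk)]
  rw [this, hs, sfx_invRev, List.take_take, min_eq_left hm]

theorem of_eq_mk (x : X) : of x = mk [(x, true)] := rfl

theorem inv_of_eq_mk (x : X) : (of x)⁻¹ = mk [(x, false)] := by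
  rw [of_eq_mk, inv_mk, invRev_singleton]
  rfl

/-- Reduced word of a canonical-form conjugate. -/
theorem px_word {w : FreeGroup X} {x : X} (hw : w = 1 ∨ FirstLetterNe w x) (b : Bool) :
    (w⁻¹ * mk [(x, b)] * w).toWord = invRev w.toWord ++ [(x, b)] ++ w.toWord := by
  have hfst : ∀ p ∈ w.toWord.head?, p.1 ≠ x := by
    rcases hw with rfl | hw
    · simp [toWord_one]
    · intro p hp hpx
      apply hw
      rw [← hpx]
      cases hh : w.toWord with
      | nil => rw [hh] at hp; simp at hp
      | cons q t => rw [hh] at hp; simp at hp; simp [hh, ← hp]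
  have hdecomp : w⁻¹ * mk [(x, b)] * w = mk (invRev w.toWord ++ [(x, b)] ++ w.toWord) := by
    conv_lhs => rw [← mk_toWord (x := w)]
    rw [inv_mk, mul_mk, mul_mk]
  rw [hdecomp]
  apply toWord_mk_of_chain
  show List.IsChain NC _
  rw [List.isChain_append, List.isChain_append]
  refine ⟨⟨chain'_invRev (chain'_toWord w), List.isChain_singleton _, ?_⟩, chain'_toWord w, ?_⟩
  · intro p hp q hq
    simp only [List.head?_cons, Option.mem_def, Option.some.injEq] at hq
    subst hq
    unfold invRev at hp
    rw [List.getLast?_reverse, List.head?_map] at hp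
    simp only [Option.mem_def, Option.map_eq_some_iff] at hp
    obtain ⟨p₀, hp₀, rfl⟩ := hp
    intro hcon
    exact hfst p₀ hp₀ hcon.1
  · intro p hp q hq
    simp only [List.getLast?_append, List.getLast?_singleton] at hp
    have hp' : (x, b) = p := by simpa using hp
    subst hp'
    intro hcon
    have : ∀ r ∈ w.toWord.head?, r = q := fun r hr => by
      rw [hr] at hq; exact (Option.some_inj.1 hq)
    cases hh : w.toWord with
    | nil => rw [hh] at hq; simp at hq
    | cons r t =>
      rw [hh] at hq
      simp only [List.head?_cons, Option.mem_def, Option.some.injEq] at hq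
      have := hfst r (by rw [hh]; simp)
      rw [hq] at this
      exact this hcon.1.symm

theorem px_norm {w : FreeGroup X} {x : X} (hw : w = 1 ∨ FirstLetterNe w x) (b : Bool) :
    (w⁻¹ * mk [(x, b)] * w).norm = 2 * w.norm + 1 := by
  rw [norm_toWord, px_word hw b]
  simp [invRev_length, ← norm_toWord]
  omega

theorem conj_letter_zpow (r : FreeGroup X) (z : X) (c : Bool) :
    r⁻¹ * mk [(z, c)] * r = (r⁻¹ * of z * r) ^ (if c then (1 : ℤ) else -1) := by
  cases c
  · simp only [if_neg Bool.false_ne_true, zpow_neg, zpow_one, mul_inv_rev, inv_inv,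
      ← inv_of_eq_mk]
    group
  · simp [of_eq_mk]

/-- Canonical representative: strip leading `x`-letters. -/
theorem exists_rep (x : X) : ∀ (n : ℕ) (w : FreeGroup X), w.norm ≤ n →
    ∃ u : FreeGroup X, u⁻¹ * of x * u = w⁻¹ * of x * w ∧
      (u = 1 ∨ FirstLetterNe u x) ∧ u.norm ≤ w.norm := by
  intro n
  induction n with
  | zero =>
    intro w hw
    have : w = 1 := by
      rw [← norm_eq_zero (x := w)]; omega
    exact ⟨1, by rw [this], Or.inl rfl, by simp [this]⟩
  | succ n ih =>
    intro w hw
    by_cases h1 : w = 1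
    · exact ⟨1, by rw [h1], Or.inl rfl, by simp [h1]⟩
    by_cases h2 : FirstLetterNe w x
    · exact ⟨w, rfl, Or.inr h2, le_rfl⟩
    -- the first letter is x^{±1}
    unfold FirstLetterNe at h2
    push_neg at h2
    obtain ⟨hd, tl, hww⟩ : ∃ hd tl, w.toWord = hd :: tl := by
      cases hh : w.toWord with
      | nil => exact absurd (toWord_eq_nil_iff.1 hh) h1
      | cons hd tl => exact ⟨hd, tl, rfl⟩
    have hhd : hd.1 = x := by
      rw [hww] at h2; simpa using h2
    have hchain := chain'_toWord w
    rw [hww] at hchain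
    set w' : FreeGroup X := mk tl with hw'
    have hw'word : w'.toWord = tl := toWord_mk_of_chain hchain.tail
    have hwdec : w = mk [hd] * w' := by
      rw [hw', mul_mk, show [hd] ++ tl = hd :: tl from rfl, ← hww, mk_toWord]
    have hcomm : mk [hd] * of x = of x * mk [hd] := by
      obtain ⟨z, c⟩ := hd
      have : z = x := hhd
      subst this
      cases c
      · rw [← inv_of_eq_mk]; group
      · rw [← of_eq_mk]
    have hconj : w'⁻¹ * of x * w' = w⁻¹ * of x * w := by
      rw [hwdec, mul_inv_rev]
      have : (mk [hd])⁻¹ * of x * mk [hd] = of x := by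
        rw [mul_assoc, ← hcomm]
        exact inv_mul_cancel_left _ _
      calc w'⁻¹ * of x * w' = w'⁻¹ * ((mk [hd])⁻¹ * of x * mk [hd]) * w' := by rw [this]
        _ = w'⁻¹ * (mk [hd])⁻¹ * of x * (mk [hd] * w') := by group
    have hnorm' : w'.norm = w.norm - 1 := by
      rw [norm_toWord, hw'word, norm_toWord, hww]
      simp
    obtain ⟨u, hu1, hu2, hu3⟩ := ih w' (by
      have : w.norm = w.toWord.length := norm_toWord w
      rw [hww] at this
      simp at this
      omega)
    refine ⟨u, by rw [hu1, hconj], hu2, by omega⟩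

/-- If a reduced word contains a distinguished letter, multiplying by the
corresponding conjugated inverse letter shortens it. -/
theorem shrink {u r : FreeGroup X} {z : X} {b : Bool} {A : List (X × Bool)}
    (hu : u.toWord = A ++ [(z, b)] ++ r.toWord) :
    (u * (r⁻¹ * mk [(z, !b)] * r)).norm < u.norm := by
  have hudec : u = mk A * mk [(z, b)] * r := by
    conv_lhs => rw [← mk_toWord (x := u)]
    rw [hu, ← mul_mk, ← mul_mk, mk_toWord]
  have hcanc : mk [(z, b)] * mk [(z, !b)] = (1 : FreeGroup X) := by
    cases b
    · rw [show ((z, !false)) = (z, true) from rfl, ← inv_of_eq_mk, ← of_eq_mk]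
      simp
    · rw [show ((z, !true)) = (z, false) from rfl, ← inv_of_eq_mk, ← of_eq_mk]
      simp
  have hprod : u * (r⁻¹ * mk [(z, !b)] * r) = mk A * r := by
    rw [hudec]
    calc mk A * mk [(z, b)] * r * (r⁻¹ * mk [(z, !b)] * r)
        = mk A * (mk [(z, b)] * mk [(z, !b)]) * r := by group
      _ = mk A * r := by rw [hcanc]; group
  rw [hprod]
  have h1 : (mk A * r).norm ≤ A.length + r.norm :=
    le_trans (norm_mul_le _ _) (by gcongr; exact norm_mk_le)
  have h2 : u.norm = A.length + 1 + r.norm := by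
    rw [norm_toWord, hu]
    simp [← norm_toWord]
    omega
  omega

theorem mk_letter_comm {s : X} {b : Bool} : mk [(s, b)] * of s = of s * mk [(s, b)] := by
  cases b
  · rw [← inv_of_eq_mk]; group
  · rw [← of_eq_mk]

theorem mk_letter_mem_zpowers {s : X} {b : Bool} :
    mk [(s, b)] ∈ Subgroup.zpowers (of s) := by
  cases b
  · rw [← inv_of_eq_mk]
    exact Subgroup.inv_mem _ (Subgroup.mem_zpowers _)
  · rw [← of_eq_mk]
    exact Subgroup.mem_zpowers _

theorem comm_inv {G : Type*} [Group G] {a b : G} (h : a * b = b * a) :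
    a⁻¹ * b = b * a⁻¹ := by
  calc a⁻¹ * b = a⁻¹ * (b * a) * a⁻¹ := by group
    _ = a⁻¹ * (a * b) * a⁻¹ := by rw [h]
    _ = b * a⁻¹ := by group

theorem central_zpowers_aux (s : X) : ∀ (n : ℕ) (c : FreeGroup X), c.norm ≤ n →
    c * of s = of s * c → c ∈ Subgroup.zpowers (of s) := by
  intro n
  induction n with
  | zero =>
    intro c hn _
    have : c = 1 := by rw [← norm_eq_zero (x := c)]; omega
    rw [this]
    exact Subgroup.one_mem _
  | succ n ih =>
    intro c hn hcomm
    by_cases hc1 : c = 1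
    · rw [hc1]; exact Subgroup.one_mem _
    obtain ⟨hd, tl, hW⟩ : ∃ hd tl, c.toWord = hd :: tl := by
      cases hW : c.toWord with
      | nil => exact absurd (toWord_eq_nil_iff.1 hW) hc1
      | cons hd tl => exact ⟨hd, tl, rfl⟩
    have hchain := chain'_toWord c
    rw [hW] at hchain
    have hnormc : c.norm = tl.length + 1 := by
      rw [norm_toWord, hW]; simp
    by_cases hhd : hd.1 = s
    · -- strip the first letter
      set c' : FreeGroup X := mk tl with hc'
      have hc'word : c'.toWord = tl := toWord_mk_of_chain hchain.tail
      have hdec : c = mk [hd] * c' := by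
        rw [hc', mul_mk, show [hd] ++ tl = hd :: tl from rfl, ← hW, mk_toWord]
      have hcm : mk [hd] * of s = of s * mk [hd] := by
        obtain ⟨z, bb⟩ := hd
        have : z = s := hhd
        subst this
        exact mk_letter_comm
      have hcm' := comm_inv hcm
      have hcomm' : c' * of s = of s * c' := by
        have h1 : c' = (mk [hd])⁻¹ * c := by rw [hdec]; group
      -- rethreaded below
        calc c' * of s = (mk [hd])⁻¹ * (c * of s) := by rw [h1]; group
          _ = (mk [hd])⁻¹ * (of s * c) := by rw [hcomm]
          _ = ((mk [hd])⁻¹ * of s) * c := by group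
          _ = (of s * (mk [hd])⁻¹) * c := by rw [hcm']
          _ = of s * c' := by rw [h1]; group
      have hc'mem := ih c' (by rw [norm_toWord, hc'word]; omega) hcomm'
      rw [hdec]
      refine Subgroup.mul_mem _ ?_ hc'mem
      obtain ⟨z, bb⟩ := hd
      have : z = s := hhd
      subst this
      exact mk_letter_mem_zpowers
    · obtain ⟨D, l, hWD⟩ : ∃ D l, c.toWord = D ++ [l] := by
        rcases c.toWord.eq_nil_or_concat' with hnil | ⟨D, l, hDl⟩
        · exact absurd (toWord_eq_nil_iff.1 hnil) hc1
        · exact ⟨D, l, hDl⟩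
      by_cases hl : l.1 = s
      · -- strip the last letter
        set c'' : FreeGroup X := mk D with hc''
        have hchainD : List.Chain' NC D := (chain'_toWord c).prefix (by rw [hWD]; exact ⟨[l], rfl⟩)
        have hc''word : c''.toWord = D := toWord_mk_of_chain hchainD
        have hdec : c = c'' * mk [l] := by
          rw [hc'', mul_mk, ← hWD, mk_toWord]
        have hcm : mk [l] * of s = of s * mk [l] := by
          obtain ⟨z, bb⟩ := l
          have : z = s := hl
          subst this
          exact mk_letter_comm
        have hcm' := comm_inv hcm
        have hcomm'' : c'' * of s = of s * c'' := by
          have h1 : c'' = c * (mk [l])⁻¹ := by rw [hdec]; group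
          calc c'' * of s = c * ((mk [l])⁻¹ * of s) := by rw [h1]; group
            _ = c * (of s * (mk [l])⁻¹) := by rw [hcm']
            _ = (c * of s) * (mk [l])⁻¹ := by group
            _ = (of s * c) * (mk [l])⁻¹ := by rw [hcomm]
            _ = of s * c'' := by rw [h1]; group
        have hDlen : D.length = tl.length := by
          have := congrArg List.length hWD
          rw [hW] at this
          simp at this
          omega
        have hc''mem := ih c'' (by rw [norm_toWord, hc''word]; omega) hcomm''
        rw [hdec]
        refine Subgroup.mul_mem _ hc''mem ?_
        obtain ⟨z, bb⟩ := l
        have : z = s := hl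
        subst this
        exact mk_letter_mem_zpowers
      · -- neither end is an s-letter : contradiction with commuting
        exfalso
        have hW1 : (c * of s).toWord = c.toWord ++ [(s, true)] := by
          have : c * of s = mk (c.toWord ++ [(s, true)]) := by
            rw [← mul_mk, mk_toWord, ← of_eq_mk]
          rw [this]
          apply toWord_mk_of_chain
          show List.IsChain NC _
          rw [List.isChain_append]
          refine ⟨chain'_toWord c, List.isChain_singleton _, ?_⟩
          intro p hp q hq
          simp only [List.head?_cons, Option.mem_def, Option.some.injEq] at hq
          subst hq
          rw [hWD, List.getLast?_concat] at hp
          simp only [Option.mem_def, Option.some.injEq] at hp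
          subst hp
          intro hcon
          exact hl hcon.1
        have hW2 : (of s * c).toWord = (s, true) :: c.toWord := by
          have : of s * c = mk ([(s, true)] ++ c.toWord) := by
            rw [← mul_mk, mk_toWord, ← of_eq_mk]
          rw [this]
          have := toWord_mk_of_chain (L := [(s, true)] ++ c.toWord) ?_
          · rw [this]; rfl
          show List.IsChain NC _
          rw [List.isChain_append]
          refine ⟨List.isChain_singleton _, chain'_toWord c, ?_⟩
          intro p hp q hq
          simp only [List.getLast?_singleton, Option.mem_def, Option.some.injEq] at hp
          subst hp
          rw [hW] at hq
          simp only [List.head?_cons, Option.mem_def, Option.some.injEq] at hq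
          subst hq
          intro hcon
          exact hhd hcon.1.symm
        have hlists : c.toWord ++ [(s, true)] = (s, true) :: c.toWord := by
          rw [← hW1, ← hW2, hcomm]
        rw [hW] at hlists
        simp only [List.cons_append] at hlists
        injection hlists with h1 _
        exact hhd (congrArg Prod.fst h1)

theorem central_zpowers {s : X} {c : FreeGroup X} (h : c * of s = of s * c) :
    c ∈ Subgroup.zpowers (of s) :=
  central_zpowers_aux s c.norm c le_rfl h

theorem conj_gen_eq {s t : X} {c : FreeGroup X}
    (h : c * of s * c⁻¹ = of t) : s = t ∧ c ∈ Subgroup.zpowers (of s) := by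
  have hst : s = t := by
    by_contra hne
    set φ : FreeGroup X →* Multiplicative ℤ :=
      FreeGroup.lift (fun z => if z = s then Multiplicative.ofAdd (1 : ℤ) else 1) with hφ
    have h1 : φ (c * of s * c⁻¹) = φ (of s) := by
      rw [MonoidHom.map_mul, MonoidHom.map_mul, MonoidHom.map_inv, mul_comm (φ c) (φ (of s))]
      group
    have h2 : φ (of s) = Multiplicative.ofAdd (1 : ℤ) := by
      rw [hφ, lift_apply_of, if_pos rfl]
    have h3 : φ (of t) = 1 := by
      rw [hφ, lift_apply_of, if_neg (Ne.symm hne)]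
    rw [h, h3, h2] at h1
    exact absurd h1.symm (by decide)
  subst hst
  have hc : c * of s = of s * c := by
    calc c * of s = (c * of s * c⁻¹) * c := by group
      _ = of s * c := by rw [h]
  exact ⟨rfl, central_zpowers hc⟩

theorem exists_rep' (x : X) (w : FreeGroup X) :
    ∃ u : FreeGroup X, u⁻¹ * of x * u = w⁻¹ * of x * w ∧
      (u = 1 ∨ FirstLetterNe u x) ∧ u.norm ≤ w.norm :=
  exists_rep x w.norm w le_rfl

/-- `q^ε` for `ε = ±1` in canonical letter form. -/
theorem zpow_letter {q v : FreeGroup X} {y : X} (hq : q = v⁻¹ * of y * v)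
    {ε : ℤ} (hε : ε ∈ ({1, -1} : Set ℤ)) :
    ∃ c : Bool, q ^ ε = v⁻¹ * mk [(y, c)] * v := by
  rcases hε with rfl | rfl
  · refine ⟨true, ?_⟩
    rw [zpow_one, hq, conj_letter_zpow, if_pos rfl, zpow_one]
  · refine ⟨false, ?_⟩
    rw [hq, conj_letter_zpow, if_neg (by simp)]

theorem gen_aux (Q : Set (FreeGroup X)) (hQ : Q ⊆ FQ X) (hsub : IsSubquandle Q) :
    ∀ (n : ℕ) (g : FreeGroup X), g ∈ Q → ∀ (x : X) (u : FreeGroup X),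
      u⁻¹ * of x * u = g → (u = 1 ∨ FirstLetterNe u x) → u.norm ≤ n →
      SubquandleClosure (SQbasis Q) g := by
  intro n
  induction n using Nat.strong_induction_on with
  | _ n ih =>
  intro g hg x u hrep hshape hn
  by_cases htx : ∀ q ∈ Q, ∀ ε ∈ ({1, -1} : Set ℤ), (u * q ^ ε).norm > u.norm
  · -- u ∈ Tx, so g is a basis element
    apply SubquandleClosure.base
    refine Set.mem_iUnion.2 ⟨x, ⟨u, ⟨⟨by rw [hrep]; exact hg, hshape⟩, htx⟩, hrep.symm⟩⟩
  · push_neg at htx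
    obtain ⟨q, hq, ε, hε, hle⟩ := htx
    obtain ⟨y, w₀, hqw⟩ := hQ hq
    obtain ⟨v, hv1, hv2, _⟩ := exists_rep' y w₀
    have hqv : q = v⁻¹ * of y * v := by rw [hqw, ← hv1]
    obtain ⟨c, hc⟩ := zpow_letter hqv hε
    have hQenorm : (q ^ ε).norm = 2 * v.norm + 1 := by rw [hc]; exact px_norm hv2 c
    obtain ⟨k, hk1, hk2, hk3, _⟩ := cancel u (q ^ ε)
    have hnormle : (u * q ^ ε).norm = u.norm + (q ^ ε).norm - 2 * k :=
      norm_mul_cancel hk1 hk2 hk3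
    have hkv : v.norm + 1 ≤ k := by omega
    have hvu : v.norm < u.norm := by omega
    have hshrink : (u * q ^ ε).norm < u.norm := by omega
    -- q is in the closure (it has a strictly shorter representative)
    have hq_cl : SubquandleClosure (SQbasis Q) q :=
      ih v.norm (by omega) q hq y v hqv.symm hv2 le_rfl
    -- the conjugated element g' = (q^ε)⁻¹ * g * q^ε
    set g' : FreeGroup X := (q ^ ε)⁻¹ * g * q ^ ε with hg'
    have hg'Q : g' ∈ Q := by
      rcases hε with rfl | rfl
      · rw [hg', zpow_one]
        exact (hsub g hg q hq).1
      · rw [hg', zpow_neg, zpow_one]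
        have := (hsub g hg q hq).2
        simpa using this
    have hg'rep : (u * q ^ ε)⁻¹ * of x * (u * q ^ ε) = g' := by
      rw [hg', ← hrep]
      group
    obtain ⟨u₂, hu₂1, hu₂2, hu₂3⟩ := exists_rep' x (u * q ^ ε)
    have hg'_cl : SubquandleClosure (SQbasis Q) g' :=
      ih (u * q ^ ε).norm (by omega) g' hg'Q x u₂ (by rw [hu₂1, hg'rep]) hu₂2 hu₂3
    -- recover g from g' by conjugating with q
    rcases hε with rfl | rfl
    · have : g = q * g' * q⁻¹ := by rw [hg', zpow_one]; group
      rw [this]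
      exact SubquandleClosure.conjInv hg'_cl hq_cl
    · have : g = q⁻¹ * g' * q := by rw [hg', zpow_neg, zpow_one]; group
      rw [this]
      exact SubquandleClosure.conj hg'_cl hq_cl

theorem generation (Q : Set (FreeGroup X)) (hQ : Q ⊆ FQ X) (hsub : IsSubquandle Q) :
    ∀ g ∈ Q, SubquandleClosure (SQbasis Q) g := by
  intro g hg
  obtain ⟨x, w, hgw⟩ := hQ hg
  obtain ⟨u, hu1, hu2, _⟩ := exists_rep' x w
  exact gen_aux Q hQ hsub u.norm g hg x u (by rw [hu1, hgw]) hu2 le_rfl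

theorem sqbasis_subset (Q : Set (FreeGroup X)) : SQbasis Q ⊆ Q := by
  intro s hs
  obtain ⟨x, ⟨w, hw, rfl⟩⟩ := Set.mem_iUnion.1 hs
  exact hw.1.1

theorem closure_subset {G : Type*} [Group G] {Q S : Set G} (hS : S ⊆ Q)
    (hsub : IsSubquandle Q) : ∀ g, SubquandleClosure S g → g ∈ Q := by
  intro g hgc
  induction hgc with
  | base h => exact hS h
  | conj _ _ iha ihb => exact (hsub _ iha _ ihb).1
  | conjInv _ _ iha ihb => exact (hsub _ iha _ ihb).2

variable {Q : Set (FreeGroup X)}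

section Nielsen

variable (ι : SQbasis Q → X) (ρ : SQbasis Q → FreeGroup X)
  (hρT : ∀ s : ↥(SQbasis Q), ρ s ∈ Tx Q (ι s))
  (hval : ∀ s : ↥(SQbasis Q), (s : FreeGroup X) = (ρ s)⁻¹ * of (ι s) * ρ s)

/-- The product in `FreeGroup X` of a word in the letters of the basis. -/
noncomputable def pr (c : List (↥(SQbasis Q) × Bool)) : FreeGroup X :=
  FreeGroup.lift (Subtype.val : SQbasis Q → FreeGroup X) (mk c)

theorem pr_append (c d : List (↥(SQbasis Q) × Bool)) :
    pr (c ++ d) = pr c * pr d := by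
  unfold pr
  rw [← mul_mk, MonoidHom.map_mul]

include hval in
theorem pr_singleton (t : ↥(SQbasis Q)) (e : Bool) :
    pr [(t, e)] = (ρ t)⁻¹ * mk [(ι t, e)] * ρ t := by
  unfold pr
  rw [lift_mk]
  cases e
  · simp only [List.map_cons, List.map_nil, List.prod_cons, List.prod_nil, cond_false, mul_one]
    rw [hval t, conj_letter_zpow, if_neg (by simp)]
    simp
  · simp only [List.map_cons, List.map_nil, List.prod_cons, List.prod_nil, cond_true, mul_one]
    rw [hval t, conj_letter_zpow, if_pos rfl, zpow_one]

include hρT hval in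
theorem pr_word (t : ↥(SQbasis Q)) (e : Bool) :
    (pr [(t, e)]).toWord = invRev (ρ t).toWord ++ [(ι t, e)] ++ (ρ t).toWord := by
  rw [pr_singleton ι ρ hval]
  exact px_word (hρT t).1.2 e

include hval in
theorem val_zpow (t : ↥(SQbasis Q)) (c : Bool) :
    (ρ t)⁻¹ * mk [(ι t, c)] * ρ t = (t : FreeGroup X) ^ (if c then (1 : ℤ) else -1) := by
  rw [conj_letter_zpow, ← hval t]

include hρT hval in
theorem nielsen_main :
    ∀ (n : ℕ) (c : List (↥(SQbasis Q) × Bool))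
      (t : ↥(SQbasis Q)) (e : Bool), c.length ≤ n →
      List.Chain' NC (c ++ [(t, e)]) →
      ∃ A, (pr (c ++ [(t, e)])).toWord = A ++ [(ι t, e)] ++ (ρ t).toWord := by
  intro n
  induction n with
  | zero =>
    intro c t e hc _
    have : c = [] := List.eq_nil_of_length_eq_zero (by omega)
    subst this
    exact ⟨invRev (ρ t).toWord, by rw [List.nil_append]; exact pr_word ι ρ hρT hval t e⟩
  | succ n ih =>
    intro c t e hc hchain
    rcases c.eq_nil_or_concat' with rfl | ⟨c₀, ⟨s, b⟩, rfl⟩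
    · exact ⟨invRev (ρ t).toWord, by rw [List.nil_append]; exact pr_word ι ρ hρT hval t e⟩
    -- inductive step
    obtain ⟨A, hA⟩ := ih c₀ s b (by simp at hc; omega)
      (hchain.prefix ⟨[(t, e)], by simp⟩)
    set P : FreeGroup X := pr (c₀ ++ [(s, b)]) with hP
    set T : FreeGroup X := pr [(t, e)] with hT
    have hTword : T.toWord = invRev (ρ t).toWord ++ [(ι t, e)] ++ (ρ t).toWord :=
      pr_word ι ρ hρT hval t e
    have hPT : pr (c₀ ++ [(s, b)] ++ [(t, e)]) = P * T := pr_append _ _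
    -- adjacency in the reduced word `c`
    have hadj : NC (s, b) (t, e) := by
      rcases List.isChain_append.1 hchain with ⟨_, _, hmid⟩
      exact hmid (s, b) (by simp) (t, e) (by simp)
    obtain ⟨k, hk1, hk2, hk3, hk4⟩ := cancel P T
    -- notation
    set w : FreeGroup X := ρ s with hw
    set v : FreeGroup X := ρ t with hv
    have hPlen : P.norm = A.length + 1 + w.norm := by
      rw [norm_toWord, hA]
      simp [← norm_toWord]
      omega
    have hTlen : T.norm = 2 * v.norm + 1 := by
      rw [norm_toWord, hTword]
      simp [invRev_length, ← norm_toWord]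
      omega
    have hvW : v.toWord.length = v.norm := (norm_toWord v).symm
    have hwW : w.toWord.length = w.norm := (norm_toWord w).symm
    -- Tx-based contradiction helper is inlined below.
    have hvval : (t : FreeGroup X) = v⁻¹ * of (ι t) * v := hval t
    have hwval : (s : FreeGroup X) = w⁻¹ * of (ι s) * w := hval s
    have htQ : (t : FreeGroup X) ∈ Q := sqbasis_subset Q t.2
    have hsQ : (s : FreeGroup X) ∈ Q := sqbasis_subset Q s.2
    -- key claim: the cancellation does not reach the middle letter of T
    have hkv : k ≤ v.norm := by
      by_contra hcon
      push_neg at hcon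
      have hmk : v.norm + 1 ≤ k := hcon
      rcases lt_trichotomy v.norm w.norm with hvw | hvw | hvw
      · -- |v| < |w| : the letter of T gets absorbed inside w's word
        have hsfx := sfx_of_cancel hk1 hk2 hk4 hmk
        have hL : sfx (v.norm + 1) P.toWord = sfx (v.norm + 1) w.toWord := by
          rw [hA, sfx_append (by rw [hwW]; omega)]
        have hR : invRev (T.toWord.take (v.norm + 1)) = [(ι t, !e)] ++ v.toWord := by
          rw [hTword, List.take_left' (by simp [invRev_length, hvW])]
          rw [invRev_append, invRev_singleton, invRev_invRev]
        have hsub2 : sfx (v.norm + 1) w.toWord = (ι t, !e) :: v.toWord := by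
          rw [← hL, hsfx, hR]; rfl
        have hwdec : w.toWord =
            (w.toWord.take (w.toWord.length - (v.norm + 1)) ++ [(ι t, !e)]) ++ v.toWord := by
          conv_lhs => rw [← List.take_append_drop (w.toWord.length - (v.norm + 1)) w.toWord]
          have : w.toWord.drop (w.toWord.length - (v.norm + 1)) = sfx (v.norm + 1) w.toWord := rfl
          rw [this, hsub2]
          simp
        have hshort := shrink hwdec
        rw [Bool.not_not] at hshort
        have hεw := (hρT s).2 (t : FreeGroup X) htQ (if e then (1 : ℤ) else -1)
          (by cases e <;> simp)
        rw [hvval, ← conj_letter_zpow] at hεw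
        have hεw' : (w * (v⁻¹ * mk [(ι t, e)] * v)).norm > w.norm := hεw
        omega
      · -- |v| = |w| : the two basis elements coincide, contradicting reducedness
        have hsfx := sfx_of_cancel hk1 hk2 hk4 hmk
        have hR : invRev (T.toWord.take (v.norm + 1)) = [(ι t, !e)] ++ v.toWord := by
          rw [hTword, List.take_left' (by simp [invRev_length, hvW])]
          rw [invRev_append, invRev_singleton, invRev_invRev]
        have hL : sfx (v.norm + 1) P.toWord = [(ι s, b)] ++ w.toWord := by
          rw [hA, List.append_assoc, sfx_append (by
            simp only [List.length_append, List.length_cons, List.length_nil, hwW]; omega)]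
          have hlen : v.norm + 1 = ([(ι s, b)] ++ w.toWord).length := by
            simp only [List.length_append, List.length_cons, List.length_nil, hwW]; omega
          rw [hlen, sfx_all]
        rw [hL, hR] at hsfx
        simp only [List.cons_append, List.nil_append] at hsfx
        injection hsfx with h1 h2
        have h1a : ι s = ι t := congrArg Prod.fst h1
        have h1b : b = !e := congrArg Prod.snd h1
        have hwv : w = v := toWord_injective h2
        have hst : s = t := by
          apply Subtype.ext
          rw [hwval, hvval, hwv, h1a]
        exact hadj ⟨hst, h1b⟩
      · -- |w| < |v| : the middle letter of the previous product gets absorbed in v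
        have hm : w.norm + 1 ≤ k := by omega
        have hsfx := sfx_of_cancel hk1 hk2 hk4 hm
        have hL : sfx (w.norm + 1) P.toWord = [(ι s, b)] ++ w.toWord := by
          rw [hA, List.append_assoc, sfx_append (by
            simp only [List.length_append, List.length_cons, List.length_nil, hwW]; omega)]
          have hlen : w.norm + 1 = ([(ι s, b)] ++ w.toWord).length := by
            simp only [List.length_append, List.length_cons, List.length_nil, hwW]
            omega
          rw [hlen, sfx_all]
        have hR : invRev (T.toWord.take (w.norm + 1)) = sfx (w.norm + 1) v.toWord := by
          rw [hTword, List.append_assoc,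
            List.take_append_of_le_length (by simp [invRev_length, hvW]; omega),
            take_invRev, invRev_invRev]
        rw [hL] at hsfx
        have hsub2 : sfx (w.norm + 1) v.toWord = (ι s, b) :: w.toWord := by
          rw [← hR, ← hsfx]; rfl
        have hvdec : v.toWord =
            (v.toWord.take (v.toWord.length - (w.norm + 1)) ++ [(ι s, b)]) ++ w.toWord := by
          conv_lhs => rw [← List.take_append_drop (v.toWord.length - (w.norm + 1)) v.toWord]
          have : v.toWord.drop (v.toWord.length - (w.norm + 1)) = sfx (w.norm + 1) v.toWord := rfl
          rw [this, hsub2]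
          simp
        have hshort := shrink hvdec
        have hεv := (hρT t).2 (s : FreeGroup X) hsQ (if !b then (1 : ℤ) else -1)
          (by cases b <;> simp)
        rw [hwval, ← conj_letter_zpow] at hεv
        have hεv' : (v * (w⁻¹ * mk [(ι s, !b)] * w)).norm > v.norm := hεv
        omega
    -- now the middle letter of T survives in the product
    refine ⟨P.toWord.take (P.norm - k) ++ (invRev v.toWord).drop k, ?_⟩
    rw [hPT, hk3, hTword, List.append_assoc,
      List.drop_append_of_le_length (by simp [invRev_length, hvW]; omega)]
    simp [List.append_assoc]

include hρT hval in
theorem independent [DecidableEq ↥(SQbasis Q)] :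
    Function.Injective (FreeGroup.lift (Subtype.val : ↥(SQbasis Q) → FreeGroup X)) := by
  rw [injective_iff_map_eq_one]
  intro a ha
  by_contra hne
  have hW : a.toWord ≠ [] := fun h => hne (toWord_eq_nil_iff.1 h)
  rcases a.toWord.eq_nil_or_concat' with h | ⟨c₀, ⟨t, e⟩, hW'⟩
  · exact hW h
  have hpra : pr (c₀ ++ [(t, e)]) = FreeGroup.lift Subtype.val a := by
    unfold pr
    rw [← hW', mk_toWord]
  have hchain : List.Chain' NC (c₀ ++ [(t, e)]) := by
    rw [← hW']; exact chain'_toWord a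
  obtain ⟨A, hA⟩ := nielsen_main ι ρ hρT hval c₀.length c₀ t e le_rfl hchain
  rw [hpra, ha, toWord_one] at hA
  exact absurd (congrArg List.length hA)
    (by simp only [List.length_nil, List.length_append, List.length_cons]; omega)

end Nielsen

/-- A permutation fixing a point: all its integer powers fix it. -/
theorem perm_fix {B : Type*} (σ : Equiv.Perm B) {x : B} (hx : σ x = x) :
    ∀ n : ℤ, (σ ^ n) x = x := by
  have hnat : ∀ m : ℕ, (σ ^ m) x = x := by
    intro m
    induction m with
    | zero => simp
    | succ m ih => rw [pow_succ, Equiv.Perm.mul_apply, hx]; exact ih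
  intro n
  cases n with
  | ofNat m => rw [Int.ofNat_eq_coe, zpow_natCast]; exact hnat m
  | negSucc m =>
    rw [zpow_negSucc]
    conv_lhs => rw [← hnat (m + 1)]
    exact Equiv.symm_apply_apply _ _


end SQF

/-- Every subquandle of a free quandle is a free quandle. -/
theorem stmt_6 {X : Type*} (Q : Set (FreeGroup X))
    (hQ : Q ⊆ FQ X) (hsub : IsSubquandle Q) :
    ∃ S : Set (FreeGroup X), IsFreeQuandleOn Q S := by
  classical
  set S : Set (FreeGroup X) := SQbasis Q with hS
  refine ⟨S, SQF.sqbasis_subset Q, ?_⟩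
  intro Q' instQ' f
  -- data for the basis elements
  have hbas : ∀ s : ↥S, ∃ (x : X) (w : FreeGroup X),
      w ∈ Tx Q x ∧ (s : FreeGroup X) = w⁻¹ * of x * w := by
    rintro ⟨sv, hs⟩
    obtain ⟨x, ⟨w, hw, hval⟩⟩ := Set.mem_iUnion.1 hs
    exact ⟨x, w, hw, hval⟩
  choose ι ρ hρT hvalρ using hbas
  -- the injective evaluation homomorphism from the abstract free group on S
  set j : FreeGroup ↥S →* FreeGroup X := FreeGroup.lift (Subtype.val : ↥S → FreeGroup X)
    with hj
  have j_of : ∀ s : ↥S, j (FreeGroup.of s) = (s : FreeGroup X) := fun s => FreeGroup.lift_apply_of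
  have hjinj : Function.Injective j := SQF.independent ι ρ hρT hvalρ
  have hgen : ∀ g ∈ Q, SubquandleClosure S g := SQF.generation Q hQ hsub
  have hclQ : ∀ g, SubquandleClosure S g → g ∈ Q :=
    SQF.closure_subset (SQF.sqbasis_subset Q) hsub
  -- every element of the closure is a conjugate of a basis element by ⟨S⟩
  have hrep : ∀ g, SubquandleClosure S g →
      ∃ (s : ↥S) (c : FreeGroup ↥S), g = j c * (s : FreeGroup X) * (j c)⁻¹ := by
    intro g hgc
    induction hgc with
    | base hin => exact ⟨⟨_, hin⟩, 1, by rw [_root_.map_one]; group⟩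
    | conj ha hb iha ihb =>
      obtain ⟨s, c, rfl⟩ := iha
      obtain ⟨t, d, rfl⟩ := ihb
      refine ⟨s, (d * FreeGroup.of t * d⁻¹)⁻¹ * c, ?_⟩
      simp only [_root_.map_mul, _root_.map_inv, j_of]
      group
    | conjInv ha hb iha ihb =>
      obtain ⟨s, c, rfl⟩ := iha
      obtain ⟨t, d, rfl⟩ := ihb
      refine ⟨s, (d * FreeGroup.of t * d⁻¹) * c, ?_⟩
      simp only [_root_.map_mul, _root_.map_inv, j_of]
      group
  -- the permutation action of the abstract free group on the target quandle
  set Φ : FreeGroup ↥S →* Equiv.Perm Q' :=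
    FreeGroup.lift (fun s : ↥S => Rack.act' (f s)) with hΦ
  have Φ_of : ∀ s : ↥S, Φ (FreeGroup.of s) = Rack.act' (f s) := fun s => FreeGroup.lift_apply_of
  have hPconj : ∀ (c : FreeGroup ↥S) (u v : Q'),
      Φ c (Shelf.act u v) = Shelf.act (Φ c u) (Φ c v) := by
    intro c
    induction c using FreeGroup.induction_on with
    | C1 => intro u v; simp
    | of s =>
      intro u v
      rw [Φ_of]
      exact Rack.self_distrib
    | inv_of s ih =>
      intro u v
      have ih' : ∀ u v : Q', (Φ (FreeGroup.of s)) (Shelf.act u v)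
          = Shelf.act ((Φ (FreeGroup.of s)) u) ((Φ (FreeGroup.of s)) v) := ih
      rw [_root_.map_inv]
      apply (Φ (FreeGroup.of s)).injective
      rw [(show ∀ (σ : Equiv.Perm Q') (z : Q'), σ (σ⁻¹ z) = z from fun σ z => Equiv.apply_symm_apply σ z), ih', (show ∀ (σ : Equiv.Perm Q') (z : Q'), σ (σ⁻¹ z) = z from fun σ z => Equiv.apply_symm_apply σ z),
        (show ∀ (σ : Equiv.Perm Q') (z : Q'), σ (σ⁻¹ z) = z from fun σ z => Equiv.apply_symm_apply σ z)]
    | mul x y ihx ihy =>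
      intro u v
      rw [_root_.map_mul, Equiv.Perm.mul_apply, Equiv.Perm.mul_apply, Equiv.Perm.mul_apply, ihy, ihx]
  -- well-definedness of the induced map
  have hwd : ∀ (s t : ↥S) (c d : FreeGroup ↥S),
      j c * (s : FreeGroup X) * (j c)⁻¹ = j d * (t : FreeGroup X) * (j d)⁻¹ →
      Φ c (f s) = Φ d (f t) := by
    intro s t c d hh
    have h2 : j (d⁻¹ * (c * FreeGroup.of s * c⁻¹) * d) = j (FreeGroup.of t) := by
      simp only [_root_.map_mul, _root_.map_inv, j_of]
      rw [show j c * (s : FreeGroup X) * (j c)⁻¹ = j d * (t : FreeGroup X) * (j d)⁻¹ from hh]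
      group
    have h3 := hjinj h2
    have h4 : (d⁻¹ * c) * FreeGroup.of s * (d⁻¹ * c)⁻¹ = FreeGroup.of t := by
      rw [← h3]; group
    obtain ⟨hst, hz⟩ := SQF.conj_gen_eq h4
    subst hst
    obtain ⟨n, hn⟩ := Subgroup.mem_zpowers_iff.1 hz
    have hc : c = d * (FreeGroup.of s) ^ n := by rw [hn]; group
    rw [hc, _root_.map_mul, _root_.map_zpow, Equiv.Perm.mul_apply, Φ_of]
    congr 1
    exact SQF.perm_fix _ (by rw [Rack.act'_apply]; exact Quandle.fix) n
  -- the induced map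
  have hrep' : ∀ g : ↥Q, ∃ (s : ↥S) (c : FreeGroup ↥S),
      (g : FreeGroup X) = j c * (s : FreeGroup X) * (j c)⁻¹ :=
    fun g => hrep g.1 (hgen g.1 g.2)
  choose sg cg hgrep using hrep'
  set h : ↥Q → Q' := fun g => Φ (cg g) (f (sg g)) with hh
  have hval' : ∀ (g : ↥Q) (s : ↥S) (c : FreeGroup ↥S),
      (g : FreeGroup X) = j c * (s : FreeGroup X) * (j c)⁻¹ → h g = Φ c (f s) :=
    fun g s c hgc => hwd _ _ _ _ ((hgrep g).symm.trans hgc)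
  -- the two defining properties
  have hb1 : ∀ s : ↥S, h ⟨s.1, SQF.sqbasis_subset Q s.2⟩ = f s := by
    intro s
    have := hval' ⟨s.1, SQF.sqbasis_subset Q s.2⟩ s 1 (by rw [_root_.map_one]; group)
    rw [this, _root_.map_one]
    rfl
  have hb2 : ∀ (a b : ↥Q) (hm : (a : FreeGroup X) * b * (a : FreeGroup X)⁻¹ ∈ Q),
      h ⟨(a : FreeGroup X) * b * (a : FreeGroup X)⁻¹, hm⟩ = Shelf.act (h a) (h b) := by
    intro a b hm
    have hab : (a : FreeGroup X) * b * (a : FreeGroup X)⁻¹ =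
        j (cg a * FreeGroup.of (sg a) * (cg a)⁻¹ * cg b) * ((sg b : ↥S) : FreeGroup X) *
          (j (cg a * FreeGroup.of (sg a) * (cg a)⁻¹ * cg b))⁻¹ := by
      rw [hgrep a, hgrep b]
      simp only [_root_.map_mul, _root_.map_inv, j_of]
      group
    rw [hval' ⟨_, hm⟩ (sg b) _ hab]
    rw [_root_.map_mul, _root_.map_mul, _root_.map_mul, _root_.map_inv, Φ_of]
    rw [Equiv.Perm.mul_apply, Equiv.Perm.mul_apply, Equiv.Perm.mul_apply]
    rw [Rack.act'_apply, hPconj, (show ∀ (σ : Equiv.Perm Q') (z : Q'), σ (σ⁻¹ z) = z from fun σ z => Equiv.apply_symm_apply σ z)]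
  refine ⟨h, ⟨hb1, hb2⟩, ?_⟩
  -- uniqueness
  rintro h' ⟨h'b1, h'b2⟩
  funext g
  obtain ⟨gv, hgQ⟩ := g
  have key : ∀ gv, SubquandleClosure S gv → ∀ hgQ : gv ∈ Q, h' ⟨gv, hgQ⟩ = h ⟨gv, hgQ⟩ := by
    intro gv hcl
    induction hcl with
    | @base av hin =>
      intro hgQ
      have e1 := h'b1 ⟨av, hin⟩
      have e2 := hb1 ⟨av, hin⟩
      exact e1.trans e2.symm
    | @conj av bv ha hb iha ihb =>
      intro hgQ
      have haQ : av ∈ Q := hclQ _ ha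
      have hbQ : bv ∈ Q := hclQ _ hb
      have hm' : ((⟨bv, hbQ⟩ : ↥Q) : FreeGroup X) * (⟨bv⁻¹ * av * bv, hgQ⟩ : ↥Q) *
          ((⟨bv, hbQ⟩ : ↥Q) : FreeGroup X)⁻¹ ∈ Q := by
        have hsimp : bv * (bv⁻¹ * av * bv) * bv⁻¹ = av := by group
        simpa [hsimp] using haQ
      have e1 := h'b2 ⟨bv, hbQ⟩ ⟨bv⁻¹ * av * bv, hgQ⟩ hm'
      have e2 := hb2 ⟨bv, hbQ⟩ ⟨bv⁻¹ * av * bv, hgQ⟩ hm'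
      have hsub1 : (⟨bv * (bv⁻¹ * av * bv) * bv⁻¹, hm'⟩ : ↥Q) = ⟨av, haQ⟩ :=
        Subtype.ext (by group)
      rw [hsub1] at e1 e2
      rw [iha haQ] at e1
      rw [ihb hbQ] at e1
      have := e1.symm.trans e2
      exact (Rack.left_cancel _).1 this
    | @conjInv av bv ha hb iha ihb =>
      intro hgQ
      have haQ : av ∈ Q := hclQ _ ha
      have hbQ : bv ∈ Q := hclQ _ hb
      have e1 := h'b2 ⟨bv, hbQ⟩ ⟨av, haQ⟩ hgQ
      have e2 := hb2 ⟨bv, hbQ⟩ ⟨av, haQ⟩ hgQ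
      rw [e1, e2, iha haQ, ihb hbQ]
  exact key gv (hgen gv hgQ) hgQ
end

section
/- (M. Hall's significant factors criterion) Let Y ⊆ F(X) with Y ∩ Y⁻¹ = ∅. Suppose there is an assignment of an index 1 ≤ i(w) ≤ |w| to each w ∈ Y ∪ Y⁻¹ with i(w⁻¹) = |w| + 1 − i(w), such that for all w, v ∈ Y ∪ Y⁻¹ with w ≠ v⁻¹, the cancellation in the reduced product wv does not reach the letters in positions i(w) of w and i(v) of v. Then Y is independent, i.e., Y freely generates a free subgroup of F(X). -/
open FreeGroup

namespace HallAux

variable {α : Type*} [DecidableEq α]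

/-- The non-cancellation relation on adjacent letters. -/
def Rno : (α × Bool) → (α × Bool) → Prop := fun a b => ¬(a.1 = b.1 ∧ a.2 = !b.2)

lemma reduce_eq_self_of_chain : ∀ {L : List (α × Bool)}, List.Chain' Rno L → reduce L = L
  | [], _ => rfl
  | [x], _ => rfl
  | x :: y :: t, h => by
    have ht : reduce (y :: t) = y :: t :=
      reduce_eq_self_of_chain (List.isChain_cons_cons.mp h).2
    rw [reduce.cons, ht]
    have : ¬(x.1 = y.1 ∧ x.2 = !y.2) := (List.isChain_cons_cons.mp h).1
    simp [this]

lemma chain_of_reduce_eq_self : ∀ {L : List (α × Bool)}, reduce L = L → List.Chain' Rno L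
  | [], _ => List.isChain_nil
  | [x], _ => List.isChain_singleton x
  | x :: y :: t, h => by
    have hlen := List.Sublist.length_le (Red.sublist (reduce.red (L := y :: t)))
    have hr : reduce (x :: y :: t) = x :: y :: t := h
    rw [reduce.cons] at hr
    rcases hyt : reduce (y :: t) with _ | ⟨hd, tl⟩
    · rw [hyt] at hr; simp at hr
    · rw [hyt] at hr
      have hr' : (if x.1 = hd.1 ∧ x.2 = !hd.2 then tl else x :: hd :: tl) = x :: y :: t := hr
      by_cases hc : x.1 = hd.1 ∧ x.2 = !hd.2
      · rw [if_pos hc] at hr'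
        rw [hyt] at hlen
        have := congrArg List.length hr'
        simp only [List.length_cons] at this hlen ⊢
        omega
      · rw [if_neg hc] at hr'
        have h2 : y :: t = hd :: tl := by
          injection hr' with _ h2
          exact h2.symm
        injection h2 with hy htl
        subst hy htl
        have hch : List.Chain' Rno (y :: t) := chain_of_reduce_eq_self hyt
        exact List.isChain_cons_cons.mpr ⟨hc, hch⟩

lemma chain_toWord (x : FreeGroup α) : List.Chain' Rno x.toWord :=
  chain_of_reduce_eq_self (reduce_toWord x)

lemma toWord_mk_of_chain {L : List (α × Bool)} (h : List.Chain' Rno L) :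
    (mk L).toWord = L := by rw [toWord_mk, reduce_eq_self_of_chain h]


variable {α : Type*} [DecidableEq α]


lemma head?_take {β : Type*} {l : List β} {m : ℕ} (h : m ≠ 0) : (l.take m).head? = l.head? := by
  cases l <;> cases m <;> simp_all

lemma cancel_parts {u v : FreeGroup α} {k : ℕ} (hk : CancelBound u v k) :
    mk (u.toWord.drop (u.toWord.length - k)) * mk (v.toWord.take k) = 1 := by
  set A := u.toWord with hA
  set B := v.toWord with hB
  set n := A.length
  have hu : u = mk (A.take (n - k)) * mk (A.drop (n - k)) := by
    rw [mul_mk, List.take_append_drop, hA, mk_toWord]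
  have hv : v = mk (B.take k) * mk (B.drop k) := by
    rw [mul_mk, List.take_append_drop, hB, mk_toWord]
  have h2 : u * v = mk (A.take (n - k) ++ B.drop k) := by
    rw [← hk, mk_toWord]
  have key : mk (A.drop (n - k)) * mk (B.take k)
      = (mk (A.take (n - k)))⁻¹ * (u * v) * (mk (B.drop k))⁻¹ := by
    conv_rhs => rw [hu, hv]
    group
  rw [h2, ← mul_mk] at key
  rw [key]
  group

lemma step {u v p : FreeGroup α} {L : List (α × Bool)} {d k : ℕ}
    (hp : p.toWord = L ++ u.toWord.drop d)
    (hk : CancelBound u v k)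
    (hdk : d + k + 1 ≤ u.toWord.length) :
    (p * v).toWord =
      (L ++ (u.toWord.drop d).take (u.toWord.length - d - k)) ++ v.toWord.drop k := by
  set A := u.toWord with hA
  set B := v.toWord with hB
  set n := A.length with hn
  have hTsplit : A.drop d = (A.drop d).take (n - d - k) ++ A.drop (n - k) := by
    conv_lhs => rw [← List.take_append_drop (n - d - k) (A.drop d)]
    congr 1
    rw [List.drop_drop]
    congr 1
    omega
  have e1 : mk (A.drop (n - k)) * mk (B.take k) = 1 := cancel_parts hk
  have htake : (A.drop d).take (n - d - k) = (A.take (n - k)).drop d := by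
    rw [List.drop_take]
    congr 1
    omega
  have hgrp : p * v = mk ((L ++ (A.drop d).take (n - d - k)) ++ B.drop k) := by
    conv_lhs => rw [← mk_toWord (x := p), ← mk_toWord (x := v), hp, ← hB]
    rw [mul_mk]
    conv_lhs => rw [hTsplit, ← List.take_append_drop k B]
    rw [show (L ++ ((A.drop d).take (n - d - k) ++ A.drop (n - k))) ++ (B.take k ++ B.drop k)
        = (L ++ (A.drop d).take (n - d - k)) ++ ((A.drop (n - k) ++ B.take k) ++ B.drop k) by
      simp [List.append_assoc]]
    rw [← mul_mk, ← mul_mk (L₂ := B.drop k), ← mul_mk (L₂ := B.take k), e1, one_mul, mul_mk]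
  have hpw : List.Chain' Rno (L ++ A.drop d) := hp ▸ chain_toWord p
  have huv : List.Chain' Rno (A.take (n - k) ++ B.drop k) := hk ▸ chain_toWord (u * v)
  have htne : (A.drop d).take (n - d - k) ≠ [] := by
    have h1 : (A.drop d).length = n - d := by simp [hn]
    intro hnil
    have := congrArg List.length hnil
    simp [h1] at this
    omega
  have hchain : List.Chain' Rno ((L ++ (A.drop d).take (n - d - k)) ++ B.drop k) := by
    rw [List.append_assoc]
    apply List.IsChain.append
    · exact hpw.left_of_append
    · rw [htake, ← List.drop_append_of_le_length (by simp [hn]; omega)]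
      exact huv.suffix (List.drop_suffix _ _)
    · intro x hx y hy
      rw [List.head?_append_of_ne_nil _ htne, head?_take (by omega)] at hy
      exact (List.isChain_append.mp hpw).2.2 x hx y hy
  rw [hgrp, toWord_mk_of_chain hchain]

lemma main {Y : Set (FreeGroup α)} (i : FreeGroup α → ℕ)
    (hi : ∀ w ∈ Y ∪ Y⁻¹, 1 ≤ i w ∧ i w ≤ w.norm ∧ i w⁻¹ = w.norm + 1 - i w)
    (hsig : ∀ w ∈ Y ∪ Y⁻¹, ∀ v ∈ Y ∪ Y⁻¹, w ≠ v⁻¹ →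
      ∃ k : ℕ, CancelBound w v k ∧ k + i w ≤ w.norm ∧ k < i v) :
    ∀ l : List (FreeGroup α), (∀ a ∈ l, a ∈ Y ∪ Y⁻¹) → l.Chain' (fun a b => a ≠ b⁻¹) →
      ∀ u ∈ l.getLast?, ∃ L, l.prod.toWord = L ++ u.toWord.drop (i u - 1) := by
  intro l
  induction l using List.reverseRecOn with
  | nil => intro _ _ u hu; simp at hu
  | append_singleton l v ih =>
    intro hmem hch u hu
    rw [List.getLast?_concat] at hu
    obtain rfl : v = u := by simpa using hu
    have hv : v ∈ Y ∪ Y⁻¹ := hmem v (by simp)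
    have hiv := hi v hv
    rcases hl : l.getLast? with _ | w
    · obtain rfl : l = [] := by simpa using hl
      refine ⟨v.toWord.take (i v - 1), ?_⟩
      simp [List.take_append_drop]
    · have hwl : w ∈ l := by
        obtain ⟨h0, rfl⟩ := List.mem_getLast?_eq_getLast hl
        exact List.getLast_mem h0
      have hw : w ∈ Y ∪ Y⁻¹ := hmem w (by simp [hwl])
      have hne : w ≠ v⁻¹ := by
        have := (List.isChain_append.mp hch).2.2 w hl v rfl
        exact this
      obtain ⟨L, hL⟩ := ih (fun a ha => hmem a (by simp [ha]))
        (List.isChain_append.mp hch).1 w hl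
      obtain ⟨k, hcb, hk1, hk2⟩ := hsig w hw v hv hne
      have hiw := hi w hw
      have hnw : w.norm = w.toWord.length := rfl
      have hdk : (i w - 1) + k + 1 ≤ w.toWord.length := by omega
      have hstep := step hL hcb hdk
      rw [List.prod_append, List.prod_singleton]
      have hsplit : v.toWord.drop (i v - 1) = (v.toWord.drop k).drop (i v - 1 - k) := by
        rw [List.drop_drop]
        congr 1
        omega
      refine ⟨(L ++ (w.toWord.drop (i w - 1)).take (w.toWord.length - (i w - 1) - k))
        ++ (v.toWord.drop k).take (i v - 1 - k), ?_⟩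
      rw [hstep, hsplit,
        List.append_assoc (L ++ (w.toWord.drop (i w - 1)).take (w.toWord.length - (i w - 1) - k)),
        List.take_append_drop]

lemma prod_ne_one {Y : Set (FreeGroup α)} (i : FreeGroup α → ℕ)
    (hi : ∀ w ∈ Y ∪ Y⁻¹, 1 ≤ i w ∧ i w ≤ w.norm ∧ i w⁻¹ = w.norm + 1 - i w)
    (hsig : ∀ w ∈ Y ∪ Y⁻¹, ∀ v ∈ Y ∪ Y⁻¹, w ≠ v⁻¹ →
      ∃ k : ℕ, CancelBound w v k ∧ k + i w ≤ w.norm ∧ k < i v)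
    {l : List (FreeGroup α)} (hmem : ∀ a ∈ l, a ∈ Y ∪ Y⁻¹)
    (hch : l.Chain' (fun a b => a ≠ b⁻¹)) (hne : l ≠ []) : l.prod ≠ 1 := by
  rcases hl : l.getLast? with _ | u
  · exact absurd (by simpa using hl) hne
  obtain ⟨L, hL⟩ := main i hi hsig l hmem hch u hl
  have hu : u ∈ Y ∪ Y⁻¹ := hmem u (by
    obtain ⟨h0, rfl⟩ := List.mem_getLast?_eq_getLast hl
    exact List.getLast_mem h0)
  have hiu := hi u hu
  have hnu : u.norm = u.toWord.length := rfl
  intro h1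
  rw [h1, toWord_one] at hL
  have := congrArg List.length hL
  simp at this
  omega


end HallAux

/-- M. Hall's significant factors criterion: if `Y ∩ Y⁻¹ = ∅` and each
`w ∈ Y ∪ Y⁻¹` has a significant factor at position `i w` (with `1 ≤ i w ≤ |w|`
and `i w⁻¹ = |w| + 1 - i w`) which is never reached by the cancellation in any
product `w * v` with `w, v ∈ Y ∪ Y⁻¹`, `w ≠ v⁻¹`, then `Y` is independent. -/
theorem stmt_7 {X : Type*} [DecidableEq X] (Y : Set (FreeGroup X))
    (hY : Y ∩ Y⁻¹ = ∅) (i : FreeGroup X → ℕ)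
    (hi : ∀ w ∈ Y ∪ Y⁻¹, 1 ≤ i w ∧ i w ≤ w.norm ∧ i w⁻¹ = w.norm + 1 - i w)
    (hsig : ∀ w ∈ Y ∪ Y⁻¹, ∀ v ∈ Y ∪ Y⁻¹, w ≠ v⁻¹ →
      ∃ k : ℕ, CancelBound w v k ∧ k + i w ≤ w.norm ∧ k < i v) :
    Independent Y := by
  have hYdisj : ∀ z : FreeGroup X, z ∈ Y → z ∈ Y⁻¹ → False := by
    intro z h1 h2
    have : z ∈ Y ∩ Y⁻¹ := ⟨h1, h2⟩
    rw [hY] at this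
    exact this
  show Function.Injective ⇑(FreeGroup.lift (Subtype.val : Y → FreeGroup X))
  rw [injective_iff_map_eq_one]
  intro g hg
  by_contra hgne
  have hWne : g.toWord ≠ [] := fun h => hgne (FreeGroup.toWord_eq_nil_iff.mp h)
  set f : (↥Y × Bool) → FreeGroup X :=
    fun x => cond x.2 (x.1 : FreeGroup X) (x.1 : FreeGroup X)⁻¹ with hf
  set l : List (FreeGroup X) := g.toWord.map f with hl
  have hprod : l.prod = FreeGroup.lift Subtype.val g := by
    conv_rhs => rw [← FreeGroup.mk_toWord (x := g)]
    rw [FreeGroup.lift_mk]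
  have hmem : ∀ a ∈ l, a ∈ Y ∪ Y⁻¹ := by
    intro a ha
    rw [hl, List.mem_map] at ha
    obtain ⟨⟨y, b⟩, -, rfl⟩ := ha
    cases b
    · right
      simp only [hf, Bool.cond_false, Set.mem_inv, inv_inv]
      exact y.2
    · left
      simpa only [hf, Bool.cond_true] using y.2
  have hch : l.Chain' (fun a b => a ≠ b⁻¹) := by
    rw [hl]
    unfold List.Chain'
    rw [List.isChain_map]
    have hgw := HallAux.chain_toWord g
    refine hgw.imp ?_
    rintro ⟨y, b⟩ ⟨z, c⟩ hnc heq
    cases b <;> cases c <;>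
      simp only [hf, Bool.cond_false, Bool.cond_true] at heq
    · -- y⁻¹ = (z⁻¹)⁻¹ = z
      rw [inv_inv] at heq
      exact hYdisj z z.2 (by rw [Set.mem_inv, ← heq, inv_inv]; exact y.2)
    · -- y⁻¹ = z⁻¹
      exact hnc ⟨Subtype.ext (inv_injective heq), by norm_num⟩
    · -- y = (z⁻¹)⁻¹ = z
      rw [inv_inv] at heq
      exact hnc ⟨Subtype.ext heq, by norm_num⟩
    · -- y = z⁻¹
      exact hYdisj y y.2 (by rw [Set.mem_inv, heq, inv_inv]; exact z.2)
  have hlne : l ≠ [] := by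
    rw [hl]
    simpa using hWne
  exact HallAux.prod_ne_one i hi hsig hmem hch hlne (hprod.trans hg)
end

section
/- Let G be a group and S ⊆ G a subset that freely generates a free subgroup of G, with S contained in a union of conjugacy classes C ⊆ G closed under conjugation. Then the subquandle of Conj(G) generated by S is isomorphic as a quandle to the free quandle FQ(S). -/
open FreeGroup

/-- If `S ⊆ G` freely generates a free subgroup and lies in a union of conjugacy
classes `C` closed under conjugation, then the subquandle of `Conj G` generated by
`S` is isomorphic as a quandle to the free quandle `FQ S`. -/
theorem stmt_13 {G : Type*} [Group G] (S : Set G) (hind : Independent S)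
    (C : Set G) (hSC : S ⊆ C) (hC : ∀ g ∈ C, ∀ h : G, h⁻¹ * g * h ∈ C) :
    ∃ e : {g : G // SubquandleClosure S g} ≃ (FQ (↥S) : Set (FreeGroup ↥S)),
      ∀ (a b : {g : G // SubquandleClosure S g})
        (hm : (a : G) * (b : G) * (a : G)⁻¹ ∈ {g : G | SubquandleClosure S g})
        (hm' : (e a : FreeGroup ↥S) * (e b : FreeGroup ↥S) * (e a : FreeGroup ↥S)⁻¹ ∈
          FQ (↥S)),
        e ⟨(a : G) * (b : G) * (a : G)⁻¹, hm⟩ =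
          ⟨(e a : FreeGroup ↥S) * (e b : FreeGroup ↥S) * (e a : FreeGroup ↥S)⁻¹, hm'⟩ := by
  classical
  set φ := FreeGroup.lift (Subtype.val : S → G) with hφ
  have conj_mul : ∀ a g h : G, (g*h)⁻¹ * a * (g*h) = h⁻¹ * (g⁻¹*a*g) * h := by
    intro a g h; group
  have hpure : ∀ x : S, φ (pure x) = (x : G) := fun x => FreeGroup.lift_apply_of
  have key2 : ∀ w : FreeGroup S, ∀ a : G, SubquandleClosure S a →
      SubquandleClosure S ((φ w)⁻¹ * a * (φ w)) ∧
      SubquandleClosure S ((φ w) * a * (φ w)⁻¹) := by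
    intro w
    induction w with
    | C1 =>
        intro a ha
        rw [_root_.map_one, inv_one, one_mul, mul_one]
        exact ⟨ha, ha⟩
    | of x =>
        intro a ha
        rw [show φ (FreeGroup.of x) = (x : G) from hpure x]
        exact ⟨SubquandleClosure.conj ha (SubquandleClosure.base x.2),
               SubquandleClosure.conjInv ha (SubquandleClosure.base x.2)⟩
    | inv_of x ih =>
        intro a ha
        rw [_root_.map_inv, inv_inv]
        exact ⟨(ih a ha).2, (ih a ha).1⟩
    | mul u v ihu ihv =>
        intro a ha
        rw [_root_.map_mul]
        constructor
        · rw [conj_mul]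
          exact (ihv _ ((ihu a ha).1)).1
        · have : φ u * φ v * a * (φ u * φ v)⁻¹
              = φ u * (φ v * a * (φ v)⁻¹) * (φ u)⁻¹ := by group
          rw [this]
          exact (ihu _ ((ihv a ha).2)).2
  have key1 : ∀ g, SubquandleClosure S g → ∃ u, u ∈ FQ (↥S) ∧ φ u = g := by
    intro g hg
    induction hg with
    | base h =>
        exact ⟨FreeGroup.of ⟨_, h⟩, ⟨⟨_, h⟩, 1, by group⟩, by simp [hφ]⟩
    | conj ha hb iha ihb =>
        obtain ⟨u, ⟨x, w, rfl⟩, hu⟩ := iha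
        obtain ⟨v, _, hv⟩ := ihb
        refine ⟨v⁻¹ * (w⁻¹ * FreeGroup.of x * w) * v, ⟨x, w*v, by group⟩, ?_⟩
        rw [_root_.map_mul, _root_.map_mul, _root_.map_inv, hu, hv]
    | conjInv ha hb iha ihb =>
        obtain ⟨u, ⟨x, w, rfl⟩, hu⟩ := iha
        obtain ⟨v, _, hv⟩ := ihb
        refine ⟨v * (w⁻¹ * FreeGroup.of x * w) * v⁻¹, ⟨x, w*v⁻¹, by group⟩, ?_⟩
        rw [_root_.map_mul, _root_.map_mul, _root_.map_inv, hu, hv]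
  have hψmem : ∀ u : (FQ (↥S) : Set (FreeGroup ↥S)), SubquandleClosure S (φ u.1) := by
    rintro ⟨u, x, w, rfl⟩
    rw [_root_.map_mul, _root_.map_mul, _root_.map_inv]
    have hx : φ (FreeGroup.of x) = (x : G) := FreeGroup.lift_apply_of
    rw [hx]
    exact (key2 w _ (SubquandleClosure.base x.2)).1
  let ψ : (FQ (↥S) : Set (FreeGroup ↥S)) → {g : G // SubquandleClosure S g} :=
    fun u => ⟨φ u.1, hψmem u⟩
  have hbij : Function.Bijective ψ := by
    constructor
    · intro u v huv
      exact Subtype.ext (hind (congrArg Subtype.val huv))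
    · rintro ⟨g, hg⟩
      obtain ⟨u, hu, hu2⟩ := key1 g hg
      exact ⟨⟨u, hu⟩, Subtype.ext hu2⟩
  refine ⟨(Equiv.ofBijective ψ hbij).symm, ?_⟩
  intro a b hm hm'
  have hval : ∀ z : {g : G // SubquandleClosure S g},
      φ (((Equiv.ofBijective ψ hbij).symm z : FreeGroup ↥S)) = (z : G) := by
    intro z
    have : ψ ((Equiv.ofBijective ψ hbij).symm z) = z :=
      (Equiv.ofBijective ψ hbij).apply_symm_apply z
    exact congrArg Subtype.val this
  rw [Equiv.symm_apply_eq]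
  apply Subtype.ext
  show (a : G) * (b : G) * (a : G)⁻¹ = φ _
  rw [_root_.map_mul, _root_.map_mul, _root_.map_inv, hval a, hval b]
end
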